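/- arXiv:1904.04255 — 6 statements merged into one kernel-verified Lean document; each statement's English description precedes it below -/
import Mathlib

section
/- Let (E,C) be an adaptable separated graph. Then the monoid M(E,C) is a refinement monoid: whenever a+b = c+d in M(E,C), there exist w,x,y,z ∈ M(E,C) with a = w+x, b = y+z, c = w+y and d = x+z. -/
/-- A (finitely) separated graph `(E,C)`: a directed graph together with,
for each vertex `v`, a partition `C v` of `s⁻¹(v)` into pairwise disjoint
nonempty finite subsets. -/
structure SepGraph where
  V : Type
  Ed : Type
  s : Ed → V
  r : Ed → V
  C : V → Set (Finset Ed)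
  c_src : ∀ v : V, ∀ X ∈ C v, ∀ e ∈ X, s e = v
  c_nonempty : ∀ v : V, ∀ X ∈ C v, X.Nonempty
  c_disjoint : ∀ v : V, ∀ X ∈ C v, ∀ Y ∈ C v, X ≠ Y → Disjoint X Y
  c_cover : ∀ e : Ed, ∃ X ∈ C (s e), e ∈ X

namespace SepGraph

variable (G : SepGraph)

/-- There is an edge from `v` to `w`. -/
def Edge (v w : G.V) : Prop := ∃ e : G.Ed, G.s e = v ∧ G.r e = w

/-- There is a directed path from `v` to `w`. -/
def Reach : G.V → G.V → Prop := Relation.ReflTransGen G.Edge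

/-- Mutual reachability: `v` and `w` lie in the same component, i.e. `[v] = [w]`. -/
def VEquiv (v w : G.V) : Prop := G.Reach v w ∧ G.Reach w v

/-- `[v] ≤ [w]` in the antisymmetrization poset `I` of `E⁰`. -/
def VLe (v w : G.V) : Prop := G.Reach w v

/-- `[v] < [w]` in the antisymmetrization poset `I` of `E⁰`. -/
def VLt (v w : G.V) : Prop := G.Reach w v ∧ ¬ G.Reach v w

/-- The free commutative monoid `F` on the vertex set `E⁰`. -/
abbrev FreeM := G.V →₀ ℕ

/-- The basis element of `F` corresponding to a vertex. -/
noncomputable def vert (v : G.V) : G.FreeM := Finsupp.single v 1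

/-- `r(X) = Σ_{e ∈ X} r(e)` as an element of `F`. -/
noncomputable def rX (X : Finset G.Ed) : G.FreeM := ∑ e ∈ X, Finsupp.single (G.r e) 1

/-- The defining relations of `M(E,C)`: `a_v = Σ_{e ∈ X} a_{r(e)}` for `X ∈ C_v`. -/
def Rel : G.FreeM → G.FreeM → Prop := fun a b =>
  ∃ v : G.V, ∃ X ∈ G.C v, a = G.vert v ∧ b = G.rX X

/-- The congruence on `F` generated by the defining relations. -/
noncomputable def mCon : AddCon G.FreeM := addConGen G.Rel

/-- The monoid `M(E,C)` of the separated graph `(E,C)`. -/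
def M := G.mCon.Quotient

noncomputable instance : AddCommMonoid G.M := inferInstanceAs (AddCommMonoid G.mCon.Quotient)

/-- The generator `a_v` of `M(E,C)`. -/
noncomputable def gen (v : G.V) : G.M := G.mCon.mk' (G.vert v)

end SepGraph

/-- The data witnessing that a separated graph is *adaptable*: the
antisymmetrization `I` of `E⁰` is finite, it is partitioned into free and
regular elements (with free components reduced to a single vertex `v^p`),
and the conditions of Definition 1.6 of the paper hold.  Here, for
`p ∈ I_reg`, the subgraph `E_p` is the restriction of `E` to the class `p`. -/
structure SepGraph.AdaptableStructure (G : SepGraph) where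
  /-- the partition `I = I_free ⊔ I_reg` (a vertex is free if its class is free) -/
  free : G.V → Prop
  /-- `I` is a finite poset -/
  finite_components : Finite (Quot G.VEquiv)
  free_respects : ∀ v w : G.V, G.VEquiv v w → (free v ↔ free w)
  /-- a free component consists of a single vertex `E_p⁰ = {v^p}` -/
  free_singleton : ∀ v : G.V, free v → ∀ w : G.V, G.VEquiv w v → w = v
  /-- for free `p`, `s⁻¹(v^p) = ∅` iff `p` is minimal in `I` -/
  free_minimal : ∀ v : G.V, free v →
    ((¬ ∃ e : G.Ed, G.s e = v) ↔ ∀ w : G.V, G.Reach v w → G.VEquiv v w)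
  /-- for free non-minimal `p`, `C_{v^p} = {X₁,…,X_{k(p)}}` is a finite family -/
  free_C_finite : ∀ v : G.V, free v → (G.C v).Finite
  /-- each `X_i ∈ C_{v^p}` contains exactly one loop `α(p,i)` at `v^p` -/
  free_loop : ∀ v : G.V, free v → ∀ X ∈ G.C v, ∃! e : G.Ed, e ∈ X ∧ G.r e = v
  /-- the remaining edges `β(p,i,t)` of `X_i` end in strictly smaller components -/
  free_targets : ∀ v : G.V, free v → ∀ X ∈ G.C v, ∀ e ∈ X, G.r e = v ∨ G.VLt (G.r e) v
  /-- `g(p,i) ≥ 1`: there is at least one connector `β(p,i,1)` in each `X_i` -/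
  free_beta : ∀ v : G.V, free v → ∀ X ∈ G.C v, ∃ e ∈ X, G.r e ≠ v
  /-- for regular `p` and `w ∈ E_p⁰`, `|C_w| = 1` -/
  reg_unique_C : ∀ w : G.V, ¬ free w → ∃! X : Finset G.Ed, X ∈ G.C w
  /-- for regular `p` and `w ∈ E_p⁰`, `|s_{E_p}⁻¹(w)| ≥ 2` -/
  reg_two_edges : ∀ w : G.V, ¬ free w → ∃ e₁ e₂ : G.Ed, e₁ ≠ e₂ ∧ G.s e₁ = w ∧ G.s e₂ = w ∧
    G.VEquiv (G.r e₁) w ∧ G.VEquiv (G.r e₂) w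
  /-- every edge leaving `w ∈ E_p⁰` stays in `E_p` or goes to some `E_q⁰` with `q < p` -/
  reg_targets : ∀ w : G.V, ¬ free w → ∀ e : G.Ed, G.s e = w →
    G.VEquiv (G.r e) w ∨ G.VLt (G.r e) w

/-- The algebraic pre-order on a commutative monoid: `x ≤ y` iff `x + z = y` for some `z`. -/
def MLe {M : Type} [AddCommMonoid M] (x y : M) : Prop := ∃ z, x + z = y

/-- A commutative monoid is conical if `x + y = 0` implies `x = y = 0`. -/
def IsConical (M : Type) [AddCommMonoid M] : Prop := ∀ x y : M, x + y = 0 → x = 0 ∧ y = 0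

/-- The refinement property for a commutative monoid. -/
def IsRefinement (M : Type) [AddCommMonoid M] : Prop := ∀ a b c d : M, a + b = c + d →
  ∃ w x y z : M, a = w + x ∧ b = y + z ∧ c = w + y ∧ d = x + z

/-- `p` is a prime element: it is not invertible, and `p ≤ a + b` implies `p ≤ a` or `p ≤ b`. -/
def IsPrimeElem {M : Type} [AddCommMonoid M] (p : M) : Prop :=
  (¬ ∃ q, p + q = 0) ∧ ∀ a b : M, MLe p (a + b) → MLe p a ∨ MLe p b

/-- A commutative monoid is primely generated if every non-invertible element is a
sum of prime elements. -/
def IsPrimelyGenerated (M : Type) [AddCommMonoid M] : Prop :=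
  ∀ x : M, (¬ ∃ q, x + q = 0) → ∃ l : Multiset M, (∀ p ∈ l, IsPrimeElem p) ∧ x = l.sum


/- ===================== Auxiliary development ===================== -/

namespace SepGraph

variable {G : SepGraph}

/-- One rewriting step: replace an occurrence of a generator `a_v` by `r(X)` for `X ∈ C v`. -/
def Step (G : SepGraph) : G.FreeM → G.FreeM → Prop := fun x y =>
  ∃ z v X, X ∈ G.C v ∧ x = z + G.vert v ∧ y = z + G.rX X

lemma step_mCon {x y : G.FreeM} (h : G.Step x y) : G.mCon x y := by
  obtain ⟨z, v, X, hX, rfl, rfl⟩ := h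
  exact G.mCon.add (G.mCon.refl z) (AddConGen.Rel.of _ _ ⟨v, X, hX, rfl, rfl⟩)

lemma rtg_mCon {x y : G.FreeM} (h : Relation.ReflTransGen G.Step x y) : G.mCon x y := by
  induction h with
  | refl => exact G.mCon.refl x
  | tail _ hs ih => exact G.mCon.trans ih (step_mCon hs)

lemma step_add {x y : G.FreeM} (h : G.Step x y) (t : G.FreeM) : G.Step (x + t) (y + t) := by
  obtain ⟨z, v, X, hX, rfl, rfl⟩ := h
  exact ⟨z + t, v, X, hX, add_right_comm z (G.vert v) t, add_right_comm z (G.rX X) t⟩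

lemma rtg_add {x y : G.FreeM} (h : Relation.ReflTransGen G.Step x y) (t : G.FreeM) :
    Relation.ReflTransGen G.Step (x + t) (y + t) :=
  Relation.ReflTransGen.lift (· + t) (fun _ _ hs => step_add hs t) _ _ h

/-- Removing and re-adding a vertex occurrence. -/
lemma sub_vert_add {f : G.FreeM} {v : G.V} (h : 1 ≤ f v) :
    (f - G.vert v) + G.vert v = f := by
  ext u
  by_cases hu : u = v
  · subst hu
    simp only [Finsupp.add_apply, Finsupp.tsub_apply, SepGraph.vert, Finsupp.single_eq_same]
    omega
  · simp only [Finsupp.add_apply, Finsupp.tsub_apply, SepGraph.vert,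
      Finsupp.single_eq_of_ne' (fun hvu => hu hvu.symm)]
    omega

/-- A basic cancellation/splitting lemma in the free monoid. -/
lemma split_single {z z' : G.FreeM} {v v' : G.V}
    (h : z + G.vert v = z' + G.vert v') :
    (v = v' ∧ z = z') ∨ ∃ w, z = w + G.vert v' ∧ z' = w + G.vert v := by
  by_cases hv : v = v'
  · subst hv
    exact Or.inl ⟨rfl, add_right_cancel h⟩
  · right
    have hp := Finsupp.ext_iff.mp h v'
    simp only [Finsupp.add_apply, SepGraph.vert, Finsupp.single_eq_same,
      Finsupp.single_eq_of_ne' hv] at hp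
    have hz1 : 1 ≤ z v' := by omega
    refine ⟨z - G.vert v', (sub_vert_add hz1).symm, ?_⟩
    have key : ((z - G.vert v') + G.vert v) + G.vert v' = z' + G.vert v' := by
      calc ((z - G.vert v') + G.vert v) + G.vert v'
          = ((z - G.vert v') + G.vert v') + G.vert v := add_right_comm _ _ _
        _ = z + G.vert v := by rw [sub_vert_add hz1]
        _ = z' + G.vert v' := h
    exact (add_right_cancel key).symm

/-- At a free vertex, every `X ∈ C v` contains a loop at `v`, hence `r(X) = a_v + β`. -/
lemma free_rX (A : G.AdaptableStructure) {v : G.V} (hv : A.free v) {X : Finset G.Ed}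
    (hX : X ∈ G.C v) : ∃ β : G.FreeM, G.rX X = G.vert v + β := by
  classical
  obtain ⟨e, ⟨heX, her⟩, -⟩ := A.free_loop v hv X hX
  refine ⟨G.rX (X.erase e), ?_⟩
  have := Finset.add_sum_erase X (fun e => Finsupp.single (G.r e) (1 : ℕ)) heX
  simp only [SepGraph.rX, SepGraph.vert, ← this, her]

/-- The diamond property for the rewriting relation, from adaptability. -/
lemma diamond (A : G.AdaptableStructure) :
    ∀ a b c : G.FreeM, G.Step a b → G.Step a c →
      ∃ d, Relation.ReflGen G.Step b d ∧ Relation.ReflGen G.Step c d := by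
  rintro a b c ⟨z, v, X, hX, rfl, rfl⟩ ⟨z', v', Y, hY, ha', rfl⟩
  rcases split_single ha' with ⟨rfl, rfl⟩ | ⟨w, rfl, rfl⟩
  · -- same occurrence rewritten
    by_cases hv : A.free v
    · obtain ⟨βX, hβX⟩ := free_rX A hv hX
      obtain ⟨βY, hβY⟩ := free_rX A hv hY
      refine ⟨z + βX + βY + G.vert v, ?_, ?_⟩
      · refine Relation.ReflGen.single ⟨z + βX, v, Y, hY, by rw [hβX]; abel, ?_⟩
        rw [hβY]; abel
      · refine Relation.ReflGen.single ⟨z + βY, v, X, hX, by rw [hβY]; abel, ?_⟩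
        rw [hβX]; abel
    · obtain ⟨X₀, -, hu⟩ := A.reg_unique_C v hv
      have : X = Y := (hu X hX).trans (hu Y hY).symm
      subst this
      exact ⟨z + G.rX X, Relation.ReflGen.refl, Relation.ReflGen.refl⟩
  · -- disjoint occurrences
    refine ⟨w + G.rX X + G.rX Y, ?_, ?_⟩
    · exact Relation.ReflGen.single ⟨w + G.rX X, v', Y, hY, by abel, by abel⟩
    · exact Relation.ReflGen.single ⟨w + G.rX Y, v, X, hX, by abel, by abel⟩

/-- Joinability under the rewriting relation. -/
def Joinable (G : SepGraph) (x y : G.FreeM) : Prop :=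
  Relation.Join (Relation.ReflTransGen G.Step) x y

lemma joinable_trans (A : G.AdaptableStructure) {x y z : G.FreeM}
    (h1 : G.Joinable x y) (h2 : G.Joinable y z) : G.Joinable x z := by
  obtain ⟨u, hxu, hyu⟩ := h1
  obtain ⟨w, hyw, hzw⟩ := h2
  obtain ⟨t, hut, hwt⟩ := Relation.church_rosser
    (fun a b c hab hac => by
      obtain ⟨d, h1, h2⟩ := diamond A a b c hab hac
      exact ⟨d, h1, h2.to_reflTransGen⟩) hyu hyw
  exact ⟨t, hxu.trans hut, hzw.trans hwt⟩

/-- The joinability congruence. -/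
def joinCon (A : G.AdaptableStructure) : AddCon G.FreeM where
  r := G.Joinable
  iseqv := ⟨fun x => ⟨x, .refl, .refl⟩, fun ⟨u, h1, h2⟩ => ⟨u, h2, h1⟩,
    fun h1 h2 => joinable_trans A h1 h2⟩
  add' := by
    rintro a b c d ⟨u, hau, hbu⟩ ⟨w, hcw, hdw⟩
    refine joinable_trans A (y := b + c) ⟨u + c, rtg_add hau c, rtg_add hbu c⟩ ?_
    have h1 : Relation.ReflTransGen G.Step (b + c) (b + w) := by
      have := rtg_add hcw b
      simpa [add_comm] using this
    have h2 : Relation.ReflTransGen G.Step (b + d) (b + w) := by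
      have := rtg_add hdw b
      simpa [add_comm] using this
    exact ⟨b + w, h1, h2⟩

lemma mCon_joinable (A : G.AdaptableStructure) {x y : G.FreeM} (h : G.mCon x y) :
    G.Joinable x y := by
  have hle : G.mCon ≤ joinCon A := by
    refine AddCon.addConGen_le.mpr ?_
    rintro a b ⟨v, X, hX, rfl, rfl⟩
    exact ⟨G.rX X, Relation.ReflTransGen.single ⟨0, v, X, hX, (zero_add _).symm,
      (zero_add _).symm⟩, Relation.ReflTransGen.refl⟩
  exact hle h

/-- Reductions from a sum split into reductions from the summands. -/
lemma rtg_split {a b e : G.FreeM} (h : Relation.ReflTransGen G.Step (a + b) e) :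
    ∃ a' b', e = a' + b' ∧ Relation.ReflTransGen G.Step a a' ∧
      Relation.ReflTransGen G.Step b b' := by
  classical
  induction h with
  | refl => exact ⟨a, b, rfl, .refl, .refl⟩
  | tail _ hs ih =>
    obtain ⟨a', b', rfl, ha, hb⟩ := ih
    obtain ⟨z, v, X, hX, hz, rfl⟩ := hs
    have hp := Finsupp.ext_iff.mp hz v
    simp only [Finsupp.add_apply, SepGraph.vert, Finsupp.single_eq_same] at hp
    have hp' : a' v + b' v = z v + 1 := hp
    by_cases hav : 1 ≤ a' v
    · have ha' : a' = (a' - G.vert v) + G.vert v := (sub_vert_add hav).symm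
      have hzz : z = (a' - G.vert v) + b' := by
        have key : ((a' - G.vert v) + b') + G.vert v = z + G.vert v := by
          calc ((a' - G.vert v) + b') + G.vert v
              = ((a' - G.vert v) + G.vert v) + b' := add_right_comm _ _ _
            _ = a' + b' := by rw [sub_vert_add hav]
            _ = z + G.vert v := hz
        exact (add_right_cancel key).symm
      refine ⟨(a' - G.vert v) + G.rX X, b', ?_, ?_, hb⟩
      · rw [hzz]; exact (add_right_comm _ _ _).symm
      · exact ha.tail ⟨a' - G.vert v, v, X, hX, ha', rfl⟩
    · have hbv : 1 ≤ b' v := by omega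
      have hb' : b' = (b' - G.vert v) + G.vert v := (sub_vert_add hbv).symm
      have hzz : z = a' + (b' - G.vert v) := by
        have key : (a' + (b' - G.vert v)) + G.vert v = z + G.vert v := by
          calc (a' + (b' - G.vert v)) + G.vert v
              = a' + ((b' - G.vert v) + G.vert v) := add_assoc _ _ _
            _ = a' + b' := by rw [sub_vert_add hbv]
            _ = z + G.vert v := hz
        exact (add_right_cancel key).symm
      refine ⟨a', (b' - G.vert v) + G.rX X, ?_, ha, ?_⟩
      · rw [hzz]; exact add_assoc a' (b' - G.vert v) (G.rX X)
      · exact hb.tail ⟨b' - G.vert v, v, X, hX, hb', rfl⟩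

lemma gen_add (x y : G.FreeM) :
    (G.mCon.mk' (x + y) : G.M) = G.mCon.mk' x + G.mCon.mk' y := rfl

/-- Refinement in the free monoid `V →₀ ℕ`. -/
lemma free_refinement (a b c d : G.FreeM) (h : a + b = c + d) :
    ∃ w x y z : G.FreeM, a = w + x ∧ b = y + z ∧ c = w + y ∧ d = x + z := by
  have hpt : ∀ v, a v + b v = c v + d v := by
    intro v
    have := Finsupp.ext_iff.mp h v
    simpa using this
  refine ⟨a - (a - c), a - c, c - a, b - (c - a), ?_, ?_, ?_, ?_⟩ <;>
    · ext v
      have := hpt v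
      simp only [Finsupp.add_apply, Finsupp.tsub_apply]
      omega

end SepGraph

/-- If `(E,C)` is an adaptable separated graph, then `M(E,C)` is a
refinement monoid. -/
theorem stmt2 (G : SepGraph) (A : G.AdaptableStructure) (a b c d : G.M)
    (h : a + b = c + d) :
    ∃ w x y z : G.M, a = w + x ∧ b = y + z ∧ c = w + y ∧ d = x + z := by
  classical
  obtain ⟨a0, rfl⟩ := AddCon.mk'_surjective a
  obtain ⟨b0, rfl⟩ := AddCon.mk'_surjective b
  obtain ⟨c0, rfl⟩ := AddCon.mk'_surjective c
  obtain ⟨d0, rfl⟩ := AddCon.mk'_surjective d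
  have hcon : G.mCon (a0 + b0) (c0 + d0) := by
    rw [← AddCon.eq]
    exact h
  obtain ⟨e, hab, hcd⟩ := SepGraph.mCon_joinable A hcon
  obtain ⟨a', b', he1, ha, hb⟩ := SepGraph.rtg_split hab
  obtain ⟨c', d', he2, hc, hd⟩ := SepGraph.rtg_split hcd
  obtain ⟨w, x, y, z, hw, hx, hy, hz⟩ :=
    SepGraph.free_refinement a' b' c' d' (he1.symm.trans he2)
  refine ⟨G.mCon.mk' w, G.mCon.mk' x, G.mCon.mk' y, G.mCon.mk' z, ?_, ?_, ?_, ?_⟩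
  · exact (G.mCon.eq.mpr (by rw [← hw]; exact SepGraph.rtg_mCon ha)).trans
      (SepGraph.gen_add w x)
  · exact (G.mCon.eq.mpr (by rw [← hx]; exact SepGraph.rtg_mCon hb)).trans
      (SepGraph.gen_add y z)
  · exact (G.mCon.eq.mpr (by rw [← hy]; exact SepGraph.rtg_mCon hc)).trans
      (SepGraph.gen_add w y)
  · exact (G.mCon.eq.mpr (by rw [← hz]; exact SepGraph.rtg_mCon hd)).trans
      (SepGraph.gen_add x z)
end

section
/- Let (E,C) be an adaptable separated graph. Then for every vertex v ∈ E⁰, the generator a_v is a prime element of M(E,C): a_v is not invertible, and whenever a_v ≤ x + y in the algebraic pre-order of M(E,C), then a_v ≤ x or a_v ≤ y. -/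
namespace SepGraph

variable (G : SepGraph)

/-- Some vertex in the support of `a` reaches `v`. -/
def P (v : G.V) (a : G.FreeM) : Prop := ∃ w : G.V, a w ≠ 0 ∧ G.Reach w v

lemma P_add (v : G.V) (a b : G.FreeM) : G.P v (a + b) ↔ G.P v a ∨ G.P v b := by
  constructor
  · rintro ⟨w, hw, hr⟩
    rw [Finsupp.add_apply] at hw
    by_cases h : a w = 0
    · exact Or.inr ⟨w, by omega, hr⟩
    · exact Or.inl ⟨w, h, hr⟩
  · rintro (⟨w, hw, hr⟩ | ⟨w, hw, hr⟩) <;>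
      exact ⟨w, by rw [Finsupp.add_apply]; omega, hr⟩

lemma P_zero (v : G.V) : ¬ G.P v 0 := by rintro ⟨w, hw, _⟩; simp at hw

lemma P_vert (v w : G.V) : G.P v (G.vert w) ↔ G.Reach w v := by
  constructor
  · rintro ⟨u, hu, hr⟩
    rcases eq_or_ne u w with rfl | hne
    · exact hr
    · exact absurd (by rw [vert]; exact Finsupp.single_eq_of_ne' (Ne.symm hne)) hu
  · intro h; exact ⟨w, by simp [vert], h⟩

lemma P_rX (v : G.V) (X : Finset G.Ed) :
    G.P v (G.rX X) ↔ ∃ e ∈ X, G.Reach (G.r e) v := by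
  classical
  unfold rX
  induction X using Finset.induction_on with
  | empty => simpa using G.P_zero v
  | @insert e s h ih =>
    rw [Finset.sum_insert h, P_add]
    constructor
    · rintro (he | hs)
      · exact ⟨e, Finset.mem_insert_self _ _, (G.P_vert v (G.r e)).1 he⟩
      · obtain ⟨f, hf, hr⟩ := ih.1 hs
        exact ⟨f, Finset.mem_insert_of_mem hf, hr⟩
    · rintro ⟨f, hf, hr⟩
      rcases Finset.mem_insert.1 hf with rfl | hf
      · exact Or.inl ((G.P_vert v (G.r f)).2 hr)
      · exact Or.inr (ih.2 ⟨f, hf, hr⟩)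

/-- The congruence "having the same `P v`-value". -/
def pCon (v : G.V) : AddCon G.FreeM where
  r a b := G.P v a ↔ G.P v b
  iseqv := ⟨fun _ => Iff.rfl, Iff.symm, Iff.trans⟩
  add' := by
    intro a b c d h1 h2
    show G.P v (a + c) ↔ G.P v (b + d)
    rw [P_add, P_add]
    exact or_congr h1 h2

lemma P_of_mCon (A : G.AdaptableStructure) (v : G.V) {a b : G.FreeM}
    (h : G.mCon a b) : G.P v a ↔ G.P v b := by
  have h' : addConGen G.Rel a b := h
  suffices hle : addConGen G.Rel ≤ G.pCon v from hle h'
  refine AddCon.addConGen_le.2 ?_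
  rintro x y ⟨w, X, hX, rfl, rfl⟩
  show G.P v (G.vert w) ↔ G.P v (G.rX X)
  rw [P_vert, P_rX]
  constructor
  · intro hw
    by_cases hf : A.free w
    · obtain ⟨e, ⟨heX, her⟩, -⟩ := A.free_loop w hf X hX
      exact ⟨e, heX, her ▸ hw⟩
    · obtain ⟨X₀, hX₀, huniq⟩ := A.reg_unique_C w hf
      obtain ⟨e₁, e₂, -, hs₁, -, hv₁, -⟩ := A.reg_two_edges w hf
      obtain ⟨X₁, hX₁, heX₁⟩ := G.c_cover e₁
      rw [hs₁] at hX₁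
      have hXX : X₁ = X := (huniq X₁ hX₁).trans (huniq X hX).symm
      exact ⟨e₁, hXX ▸ heX₁, hv₁.1.trans hw⟩
  · rintro ⟨e, heX, hr⟩
    exact (Relation.ReflTransGen.single ⟨e, G.c_src w X hX e heX, rfl⟩).trans hr

lemma mle_trans {N : Type} [AddCommMonoid N] {a b c : N}
    (h1 : MLe a b) (h2 : MLe b c) : MLe a c := by
  obtain ⟨z, rfl⟩ := h1; obtain ⟨z', rfl⟩ := h2
  exact ⟨z + z', (add_assoc _ _ _).symm⟩

lemma gen_le_of_reach {v w : G.V} (h : G.Reach w v) : MLe (G.gen v) (G.gen w) := by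
  classical
  induction h using Relation.ReflTransGen.head_induction_on with
  | refl => exact ⟨0, add_zero _⟩
  | head hedge _ ih =>
    rename_i a b _
    refine mle_trans ih ?_
    obtain ⟨e, hs, hr⟩ := hedge
    obtain ⟨X, hX, heX⟩ := G.c_cover e
    rw [hs] at hX
    have hrel : G.mCon (G.vert a) (G.rX X) :=
      AddConGen.Rel.of _ _ ⟨a, X, hX, rfl, rfl⟩
    have hmk : G.gen a = G.mCon.mk' (G.rX X) := (G.mCon.eq).2 hrel
    have hsplit : G.rX X = G.vert b + ∑ f ∈ X.erase e, Finsupp.single (G.r f) 1 := by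
      rw [rX, vert, ← hr]
      exact (Finset.add_sum_erase _ _ heX).symm
    refine ⟨(G.mCon.mk' (∑ f ∈ X.erase e, Finsupp.single (G.r f) 1) : G.M), ?_⟩
    exact ((map_add G.mCon.mk' (G.vert b) (∑ f ∈ X.erase e,
      Finsupp.single (G.r f) 1)).symm.trans (congrArg _ hsplit.symm)).trans hmk.symm

lemma gen_le_mk_iff (A : G.AdaptableStructure) (v : G.V) (a : G.FreeM) :
    MLe (G.gen v) (G.mCon.mk' a) ↔ G.P v a := by
  constructor
  · rintro ⟨z, hz⟩
    obtain ⟨b, rfl⟩ := G.mCon.mk'_surjective z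
    have hz' : G.mCon.mk' (G.vert v + b) = G.mCon.mk' a := by
      rw [map_add]; exact hz
    have := G.P_of_mCon A v ((G.mCon.eq).1 hz')
    exact this.1 ((G.P_add v _ _).2 (Or.inl ((G.P_vert v v).2 Relation.ReflTransGen.refl)))
  · rintro ⟨w, hw, hr⟩
    refine mle_trans (G.gen_le_of_reach hr) ⟨(G.mCon.mk' (a - G.vert w) : G.M), ?_⟩
    have : G.vert w + (a - G.vert w) = a := by
      ext u
      rcases eq_or_ne u w with rfl | hne
      · have := Nat.pos_of_ne_zero hw
        simp [vert, Finsupp.single_apply, Finsupp.tsub_apply]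
        omega
      · simp [vert, Finsupp.single_apply, Ne.symm hne, Finsupp.tsub_apply]
    exact (map_add G.mCon.mk' (G.vert w) (a - G.vert w)).symm.trans (congrArg _ this)

end SepGraph

/-- If `(E,C)` is an adaptable separated graph, then every generator
`a_v` (`v ∈ E⁰`) is a prime element of `M(E,C)`. -/
theorem stmt5 (G : SepGraph) (A : G.AdaptableStructure) (v : G.V) :
    IsPrimeElem (G.gen v) := by
  classical
  constructor
  · rintro ⟨q, hq⟩
    obtain ⟨b, rfl⟩ := G.mCon.mk'_surjective q
    have hq' : G.mCon.mk' (G.vert v + b) = G.mCon.mk' 0 := by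
      rw [map_add, map_zero]; exact hq
    exact G.P_zero v ((G.P_of_mCon A v ((G.mCon.eq).1 hq')).1
      ((G.P_add v _ _).2 (Or.inl ((G.P_vert v v).2 Relation.ReflTransGen.refl))))
  · intro x y hxy
    obtain ⟨a, rfl⟩ := G.mCon.mk'_surjective x
    obtain ⟨b, rfl⟩ := G.mCon.mk'_surjective y
    have hxy' : MLe (G.gen v) (G.mCon.mk' (a + b)) := by
      rw [map_add]; exact hxy
    rcases (G.P_add v a b).1 ((G.gen_le_mk_iff A v _).1 hxy') with h | h
    · exact Or.inl ((G.gen_le_mk_iff A v a).2 h)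
    · exact Or.inr ((G.gen_le_mk_iff A v b).2 h)
end

section
/- Let M be a commutative monoid, H an abelian group, and φ : M → H a surjective monoid homomorphism. Let ι : M → G(M) be the canonical map of M into its Grothendieck group and let G(φ) : G(M) → H be the unique group homomorphism with G(φ) ∘ ι = φ. If G(M) is a finitely generated abelian group, then the kernel of G(φ) is generated as a group by finitely many strictly positive elements, i.e., there exist x₁,…,x_k ∈ M with ι(x₁),…,ι(x_k) ∈ ker G(φ) generating ker G(φ) as a group. -/
/-- (Proposition 2.11) Let `M` be a commutative monoid, `ι : M → G`
its Grothendieck group, `φ : M → H` a surjective monoid homomorphism onto an abelian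
group and `ψ = G(φ) : G → H` the induced group homomorphism.  If `G` is a finitely
generated abelian group, then `ker ψ` is generated, as a group, by finitely many
strictly positive elements. -/
theorem stmt8 (M G H : Type) [AddCommMonoid M] [AddCommGroup G] [AddCommGroup H]
    (ι : M →+ G)
    (huniv : ∀ (K : Type) [AddCommGroup K] (f : M →+ K),
      ∃! g : G →+ K, ∀ m : M, g (ι m) = f m)
    (hfg : AddGroup.FG G)
    (φ : M →+ H) (hφ : Function.Surjective φ)
    (ψ : G →+ H) (hψ : ∀ m : M, ψ (ι m) = φ m) :
    ∃ (k : ℕ) (x : Fin k → M), (∀ i : Fin k, ψ (ι (x i)) = 0) ∧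
      AddSubgroup.closure (Set.range fun i => ι (x i)) = ψ.ker := by
  classical
  -- Step 1: G is generated as a group by the image of ι
  have htop : AddSubgroup.closure (Set.range ι) = ⊤ := by
    set S := AddSubgroup.closure (Set.range ι) with hS
    obtain ⟨g, hg, hguniq⟩ := huniv (G ⧸ S) ((QuotientAddGroup.mk' S).comp ι)
    have h1 : QuotientAddGroup.mk' S = g := hguniq _ (fun m => rfl)
    have h2 : (0 : G →+ G ⧸ S) = g := by
      refine hguniq _ (fun m => ?_)
      have hm : ι m ∈ S := AddSubgroup.subset_closure (Set.mem_range_self m)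
      simp only [AddMonoidHom.zero_apply, AddMonoidHom.comp_apply]
      exact ((QuotientAddGroup.eq_zero_iff _).2 hm).symm
    have h3 : QuotientAddGroup.mk' S = (0 : G →+ G ⧸ S) := h1.trans h2.symm
    ext y
    simp only [AddSubgroup.mem_top, iff_true]
    have := congrArg (fun f : G →+ G ⧸ S => f y) h3
    simpa [QuotientAddGroup.eq_zero_iff] using this
  -- Step 2: every element of G is a difference of two elements of ι(M)
  have hdiff : ∀ g : G, ∃ a b : M, ι a - ι b = g := by
    intro g
    let D : AddSubgroup G :=
      { carrier := {g | ∃ a b : M, ι a - ι b = g}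
        zero_mem' := ⟨0, 0, by simp⟩
        add_mem' := by
          rintro _ _ ⟨a, b, rfl⟩ ⟨c, d, rfl⟩
          exact ⟨a + c, b + d, by simp; abel⟩
        neg_mem' := by
          rintro _ ⟨a, b, rfl⟩
          exact ⟨b, a, by abel⟩ }
    have hle : AddSubgroup.closure (Set.range ι) ≤ D := by
      refine AddSubgroup.closure_le D |>.2 ?_
      rintro _ ⟨m, rfl⟩
      exact ⟨m, 0, by simp⟩
    rw [htop] at hle
    exact hle (AddSubgroup.mem_top g)
  -- Step 3: ker ψ is finitely generated
  have hmod : Module.Finite ℤ G := Module.Finite.iff_addGroup_fg.2 hfg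
  have : IsNoetherian ℤ G := inferInstance
  have hker : (AddSubgroup.toIntSubmodule ψ.ker).FG := IsNoetherian.noetherian _
  rw [Submodule.fg_iff_addSubgroup_fg] at hker
  obtain ⟨T, hT⟩ := hker
  have hT' : (AddSubgroup.toIntSubmodule ψ.ker).toAddSubgroup = ψ.ker := rfl
  rw [hT'] at hT
  -- Step 4: build generators
  choose a b hab using hdiff
  choose c hc using fun g : G => hφ (-φ (b g))
  have key : ∀ g ∈ (T : Set G), ψ g = 0 := by
    intro g hg
    have : g ∈ ψ.ker := hT ▸ AddSubgroup.subset_closure hg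
    exact this
  have hmemA : ∀ g ∈ (T : Set G), ψ (ι (a g + c g)) = 0 := by
    intro g hg
    have hsub : φ (a g) = φ (b g) := by
      have h := key g hg
      rw [← hab g, map_sub, hψ, hψ] at h
      exact sub_eq_zero.mp h
    rw [hψ, map_add, hc g, hsub]; simp
  have hmemB : ∀ g ∈ (T : Set G), ψ (ι (b g + c g)) = 0 := by
    intro g hg
    rw [hψ, map_add, hc g]; simp
  -- index type
  let e : Fin T.card ≃ T := T.equivFin.symm
  let y : Fin T.card ⊕ Fin T.card → M :=
    Sum.elim (fun j => a (e j) + c (e j)) (fun j => b (e j) + c (e j))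
  let x : Fin (T.card + T.card) → M := fun i => y (finSumFinEquiv.symm i)
  have hx : ∀ i, ψ (ι (x i)) = 0 := by
    intro i
    rcases h : finSumFinEquiv.symm i with j | j
    · simpa [x, y, h] using hmemA (e j) (e j).2
    · simpa [x, y, h] using hmemB (e j) (e j).2
  refine ⟨T.card + T.card, x, hx, ?_⟩
  apply le_antisymm
  · rw [AddSubgroup.closure_le]
    rintro _ ⟨i, rfl⟩
    exact hx i
  · rw [← hT, AddSubgroup.closure_le]
    intro g hg
    have hge : g = ι (a g + c g) - ι (b g + c g) := by
      conv_lhs => rw [← hab g]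
      simp only [map_add]
      abel
    rw [hge]
    obtain ⟨j, hj⟩ := e.surjective ⟨g, hg⟩
    have hjg : (e j : G) = g := congrArg Subtype.val hj
    refine sub_mem ?_ ?_
    · refine AddSubgroup.subset_closure ⟨finSumFinEquiv (Sum.inl j), ?_⟩
      show ι (y (finSumFinEquiv.symm (finSumFinEquiv (Sum.inl j)))) = _
      rw [Equiv.symm_apply_apply]
      simp [y, hjg]
    · refine AddSubgroup.subset_closure ⟨finSumFinEquiv (Sum.inr j), ?_⟩
      show ι (y (finSumFinEquiv.symm (finSumFinEquiv (Sum.inr j)))) = _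
      rw [Equiv.symm_apply_apply]
      simp [y, hjg]
end

section
/- Let I be a finite poset with a partition I = I_free ⊔ I_reg, define the relation ◁ on I by p ◁ q iff p < q or p = q ∈ I_reg, and let M(I,◁) be the commutative monoid with generating set I and relations q = q + p whenever p ◁ q. Then M(I,◁) is an antisymmetric finitely generated refinement monoid, its set of prime elements is exactly the set of images of elements of I, and an element p ∈ I is a regular prime (2p ≤ p) iff p ∈ I_reg and a free prime (np ≤ mp implies n ≤ m) iff p ∈ I_free. -/
/-- The congruence defining the monoid `M(I,◁)` for a poset `I` with a partition
`I = I_free ⊔ I_reg`: generating set `I` and relations `q = q + p` whenever `p ◁ q`,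
where `p ◁ q` iff `p < q` or `p = q ∈ I_reg`. -/
noncomputable def triCon (I : Type) [PartialOrder I] (free : I → Prop) : AddCon (I →₀ ℕ) :=
  addConGen fun a b => ∃ p q : I, (p < q ∨ (p = q ∧ ¬ free p)) ∧
    a = Finsupp.single q 1 ∧ b = Finsupp.single q 1 + Finsupp.single p 1

/-- The monoid `M(I,◁)`. -/
def MIdx (I : Type) [PartialOrder I] (free : I → Prop) : Type := (triCon I free).Quotient

noncomputable instance (I : Type) [PartialOrder I] (free : I → Prop) :
    AddCommMonoid (MIdx I free) := inferInstanceAs (AddCommMonoid (triCon I free).Quotient)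

/-- The image in `M(I,◁)` of the generator corresponding to `p ∈ I`. -/
noncomputable def genI (I : Type) [PartialOrder I] (free : I → Prop) (p : I) :
    MIdx I free := (triCon I free).mk' (Finsupp.single p 1)

namespace Stmt10
attribute [local instance] Classical.propDecidable

variable {I : Type} [PartialOrder I]

/-- `p` is dominated in `x`: some strictly larger element has nonzero coefficient. -/
def dm (x : I →₀ ℕ) (p : I) : Prop := ∃ q, x q ≠ 0 ∧ p < q

/-- Normal form. -/
noncomputable def nf (free : I → Prop) (x : I →₀ ℕ) : I →₀ ℕ :=
  Finsupp.onFinset x.support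
    (fun p => if dm x p then 0 else if free p then x p else min (x p) 1)
    (by
      intro a ha
      simp only [Finsupp.mem_support_iff]
      by_contra h
      simp [h] at ha)

variable {free : I → Prop}

theorem nf_apply (x : I →₀ ℕ) (p : I) :
    nf free x p = if dm x p then 0 else if free p then x p else min (x p) 1 := rfl

theorem nf_apply_of_dm {x : I →₀ ℕ} {p : I} (h : dm x p) : nf free x p = 0 := by
  simp [nf_apply, h]

theorem nf_le_apply (x : I →₀ ℕ) (p : I) : nf free x p ≤ x p := by
  rw [nf_apply]; split <;> [omega; skip]; split <;> omega

theorem dm_add (x y : I →₀ ℕ) (p : I) : dm (x + y) p ↔ dm x p ∨ dm y p := by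
  constructor
  · rintro ⟨q, hq, hpq⟩
    simp only [Finsupp.add_apply] at hq
    rcases Nat.eq_zero_or_pos (x q) with h | h
    · exact Or.inr ⟨q, by omega, hpq⟩
    · exact Or.inl ⟨q, by omega, hpq⟩
  · rintro (⟨q, hq, hpq⟩ | ⟨q, hq, hpq⟩) <;> exact ⟨q, by simp [Finsupp.add_apply]; omega, hpq⟩

theorem exists_max {x : I →₀ ℕ} {p : I} [Finite I] (h : dm x p) :
    ∃ q, x q ≠ 0 ∧ p < q ∧ ¬ dm x q := by
  classical
  haveI := Fintype.ofFinite I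
  obtain ⟨q0, hq0, hpq0⟩ := h
  have hne : (x.support.filter (fun q => p < q)).Nonempty :=
    ⟨q0, by simp [Finsupp.mem_support_iff, hq0, hpq0]⟩
  obtain ⟨q, hqm⟩ := Finset.exists_maximal hne
  have hq := hqm.1
  have hmax : ∀ r ∈ x.support.filter (fun q => p < q), ¬ q < r :=
    fun r hr hqr => lt_irrefl q (lt_of_lt_of_le hqr (hqm.2 hr hqr.le))
  simp only [Finset.mem_filter, Finsupp.mem_support_iff] at hq
  refine ⟨q, hq.1, hq.2, ?_⟩
  rintro ⟨r, hr, hqr⟩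
  exact hmax r (by simp [Finset.mem_filter, Finsupp.mem_support_iff, hr, lt_trans hq.2 hqr]) hqr

theorem dm_nf [Finite I] (x : I →₀ ℕ) (p : I) : dm (nf free x) p ↔ dm x p := by
  constructor
  · rintro ⟨q, hq, hpq⟩
    refine ⟨q, fun h0 => hq ?_, hpq⟩
    rw [nf_apply]; split; · rfl
    · simp [h0]
  · intro h
    obtain ⟨q, hq, hpq, hnd⟩ := exists_max h
    refine ⟨q, ?_, hpq⟩
    rw [nf_apply, if_neg hnd]
    split <;> omega

theorem nf_eq_zero_iff [Finite I] {x : I →₀ ℕ} : nf free x = 0 ↔ x = 0 := by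
  constructor
  · intro h
    by_contra hx
    obtain ⟨p, hp⟩ : ∃ p, x p ≠ 0 := by
      by_contra h'
      push_neg at h'
      exact hx (Finsupp.ext fun a => h' a)
    rcases Classical.em (dm x p) with hd | hd
    · obtain ⟨q, hq, _, hnd⟩ := exists_max hd
      have := congrFun (congrArg (fun f => f.toFun) h) q
      have h2 : nf free x q = 0 := by rw [h]; rfl
      rw [nf_apply, if_neg hnd] at h2
      split at h2 <;> omega
    · have h2 : nf free x p = 0 := by rw [h]; rfl
      rw [nf_apply, if_neg hd] at h2
      split at h2 <;> omega
  · rintro rfl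
    ext p
    rw [nf_apply]
    split <;> simp

theorem nf_idem [Finite I] (x : I →₀ ℕ) : nf free (nf free x) = nf free x := by
  ext p
  rw [nf_apply (nf free x) p, dm_nf]
  rcases Classical.em (dm x p) with h | h
  · rw [if_pos h, nf_apply_of_dm h]
  · rw [if_neg h, nf_apply, if_neg h]
    rcases Classical.em (free p) with hf | hf
    · rw [if_pos hf, if_pos hf]
    · rw [if_neg hf, if_neg hf]; omega

theorem nf_add_nf_left [Finite I] (x z : I →₀ ℕ) :
    nf free (nf free x + z) = nf free (x + z) := by
  ext p
  rw [nf_apply, nf_apply, dm_add, dm_add, dm_nf]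
  rcases Classical.em (dm x p ∨ dm z p) with h | h
  · rw [if_pos h, if_pos h]
  · rw [if_neg h, if_neg h]
    have hx : ¬ dm x p := fun hc => h (Or.inl hc)
    simp only [Finsupp.add_apply, nf_apply, if_neg hx]
    rcases Classical.em (free p) with hf | hf
    · rw [if_pos hf, if_pos hf, if_pos hf]
    · rw [if_neg hf, if_neg hf, if_neg hf]; omega

theorem nf_add_congr_left [Finite I] {x y : I →₀ ℕ} (h : nf free x = nf free y) (z : I →₀ ℕ) :
    nf free (x + z) = nf free (y + z) := by
  rw [← nf_add_nf_left x z, h, nf_add_nf_left]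

theorem dm_congr [Finite I] {x y : I →₀ ℕ} (h : nf free x = nf free y) (p : I) :
    dm x p ↔ dm y p := by
  rw [← dm_nf (free := free), h, dm_nf]


theorem dm_single {q : I} {k : ℕ} {r : I} : dm (Finsupp.single q k) r ↔ k ≠ 0 ∧ r < q := by
  constructor
  · rintro ⟨s, hs, hrs⟩
    rcases eq_or_ne q s with rfl | hne
    · rw [Finsupp.single_apply, if_pos rfl] at hs; exact ⟨hs, hrs⟩
    · rw [Finsupp.single_apply, if_neg hne] at hs; exact absurd rfl hs
  · rintro ⟨hk, hrq⟩
    exact ⟨q, by rw [Finsupp.single_apply, if_pos rfl]; exact hk, hrq⟩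

theorem tri_base {free : I → Prop} {p q : I} (h : p < q ∨ (p = q ∧ ¬ free p)) :
    triCon I free (Finsupp.single q 1) (Finsupp.single q 1 + Finsupp.single p 1) :=
  AddConGen.Rel.of _ _ ⟨p, q, h, rfl, rfl⟩

theorem tri_pump {free : I → Prop} {p q : I} (h : p < q ∨ (p = q ∧ ¬ free p)) (n : ℕ) :
    triCon I free (Finsupp.single q 1 + Finsupp.single p n) (Finsupp.single q 1) := by
  induction n with
  | zero => rw [Finsupp.single_zero, add_zero]; exact (triCon I free).refl _
  | succ n ih =>
    have e : Finsupp.single q 1 + Finsupp.single p (n + 1)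
        = (Finsupp.single q 1 + Finsupp.single p 1) + Finsupp.single p n := by
      rw [add_assoc, ← Finsupp.single_add, add_comm 1 n]
    rw [e]
    exact (triCon I free).trans
      (((triCon I free).symm (tri_base h)).add ((triCon I free).refl (Finsupp.single p n))) ih

theorem tri_absorb {free : I → Prop} {q : I} (t : I →₀ ℕ) (hq : t q ≠ 0) {p : I}
    (h : p < q ∨ (p = q ∧ ¬ free p)) (n : ℕ) :
    triCon I free (t + Finsupp.single p n) t := by
  have hle : Finsupp.single q 1 ≤ t := Finsupp.single_le_iff.mpr (by omega)
  have ht : Finsupp.single q 1 + (t - Finsupp.single q 1) = t := add_tsub_cancel_of_le hle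
  have key := (tri_pump h n).add ((triCon I free).refl (t - Finsupp.single q 1))
  have e1 : (Finsupp.single q 1 + Finsupp.single p n) + (t - Finsupp.single q 1)
      = t + Finsupp.single p n := by
    rw [add_comm (Finsupp.single q 1) (Finsupp.single p n), add_assoc, ht, add_comm]
  rw [e1, ht] at key
  exact key


variable (free) in
noncomputable def nCon [Finite I] : AddCon (I →₀ ℕ) where
  r x y := nf free x = nf free y
  iseqv := ⟨fun _ => rfl, Eq.symm, Eq.trans⟩
  add' := by
    intro a b c d h1 h2
    calc nf free (a + c) = nf free (b + c) := nf_add_congr_left h1 c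
    _ = nf free (c + b) := by rw [add_comm]
    _ = nf free (d + b) := nf_add_congr_left h2 b
    _ = nf free (b + d) := by rw [add_comm]

theorem nf_gen [Finite I] {p q : I} (h : p < q ∨ (p = q ∧ ¬ free p)) :
    nf free (Finsupp.single q 1 + Finsupp.single p 1) = nf free (Finsupp.single q 1) := by
  ext r
  rw [nf_apply, nf_apply, dm_add]
  have hd : (dm (Finsupp.single q 1) r ∨ dm (Finsupp.single p 1) r) ↔
      dm (Finsupp.single q 1) r := by
    rw [dm_single, dm_single]
    rcases h with h | ⟨rfl, _⟩
    · constructor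
      · rintro (h1 | h1)
        · exact h1
        · exact ⟨one_ne_zero, lt_trans h1.2 h⟩
      · exact Or.inl
    · tauto
  simp only [hd]
  rcases Classical.em (dm (Finsupp.single q 1) r) with hdm | hdm
  · rw [if_pos hdm, if_pos hdm]
  · rw [if_neg hdm, if_neg hdm]
    rw [dm_single] at hdm
    have hr : ¬ r < q := fun hc => hdm ⟨one_ne_zero, hc⟩
    simp only [Finsupp.add_apply, Finsupp.single_apply]
    rcases h with hlt | ⟨rfl, hf⟩
    · have h0 : (if p = r then (1:ℕ) else 0) = 0 := if_neg (by rintro rfl; exact hr hlt)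
      rw [h0, add_zero]
    · rcases eq_or_ne p r with rfl | hne
      · rw [if_pos rfl, if_neg hf, if_neg hf]; omega
      · rw [if_neg hne, zero_add]

theorem tri_le_nCon [Finite I] : triCon I free ≤ nCon free := by
  apply AddCon.addConGen_le.mpr
  rintro a b ⟨p, q, h, rfl, rfl⟩
  exact (nf_gen h).symm

/-- The part of `x` at non-dominated points. -/
noncomputable def res (x : I →₀ ℕ) : I →₀ ℕ :=
  Finsupp.onFinset x.support (fun p => if dm x p then 0 else x p)
    (by
      intro a ha
      rw [Finsupp.mem_support_iff]
      by_contra h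
      simp [h] at ha)

theorem res_apply (x : I →₀ ℕ) (p : I) : res x p = if dm x p then 0 else x p := rfl

theorem dm_res [Finite I] (x : I →₀ ℕ) (p : I) : dm (res x) p ↔ dm x p := by
  constructor
  · rintro ⟨q, hq, hpq⟩
    refine ⟨q, fun h0 => hq ?_, hpq⟩
    rw [res_apply]
    split <;> simp [h0]
  · intro h
    obtain ⟨q, hq, hpq, hnd⟩ := exists_max h
    exact ⟨q, by rw [res_apply, if_neg hnd]; exact hq, hpq⟩

theorem nf_res [Finite I] (x : I →₀ ℕ) : nf free (res x) = nf free x := by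
  ext p
  rw [nf_apply, nf_apply]
  rcases Classical.em (dm x p) with h | h
  · rw [if_pos h, if_pos ((dm_res x p).mpr h)]
  · rw [if_neg h, if_neg (fun hc => h ((dm_res x p).mp hc)), res_apply, if_neg h]

theorem tri_res [Finite I] (x : I →₀ ℕ) : triCon I free x (res x) := by
  generalize hn : (x.support.filter (fun p => dm x p)).card = n
  induction n using Nat.strong_induction_on generalizing x with
  | _ n ih =>
  rcases Nat.eq_zero_or_pos n with rfl | hpos
  · have he : ∀ p, x p ≠ 0 → ¬ dm x p := by
      intro p hp hd
      have hmem : p ∈ x.support.filter (fun p => dm x p) := by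
        simp [Finset.mem_filter, Finsupp.mem_support_iff, hp, hd]
      rw [Finset.card_eq_zero.mp hn] at hmem
      simp at hmem
    have hrx : res x = x := by
      ext p
      rw [res_apply]
      rcases Classical.em (x p = 0) with h0 | h0
      · split <;> simp [h0]
      · rw [if_neg (he p h0)]
    rw [hrx]
    exact (triCon I free).refl x
  · have hne : (x.support.filter (fun p => dm x p)).Nonempty := by
      rw [← Finset.card_pos, hn]; exact hpos
    obtain ⟨p, hp⟩ := hne
    simp only [Finset.mem_filter, Finsupp.mem_support_iff] at hp
    obtain ⟨hxp, hd⟩ := hp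
    obtain ⟨q, hq, hpq⟩ := hd
    have hqp : q ≠ p := fun h => absurd hpq (by rw [h]; exact lt_irrefl p)
    set x' := x.erase p with hx'
    have he : x' q ≠ 0 := by rw [hx', Finsupp.erase_ne hqp]; exact hq
    have hxe : x = x' + Finsupp.single p (x p) := by
      ext r
      rcases eq_or_ne r p with rfl | hr
      · simp [hx', Finsupp.erase_same, Finsupp.single_apply]
      · simp [hx', Finsupp.erase_ne hr, Finsupp.single_apply, Ne.symm hr]
    have step : triCon I free x x' := by
      conv_lhs => rw [hxe]
      exact tri_absorb x' he (Or.inl hpq) (x p)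
    have hdm : ∀ r, dm x' r ↔ dm x r := by
      intro r
      constructor
      · rintro ⟨s, hs, hrs⟩
        rcases eq_or_ne s p with rfl | h
        · rw [hx', Finsupp.erase_same] at hs; exact absurd rfl hs
        · exact ⟨s, by rwa [hx', Finsupp.erase_ne h] at hs, hrs⟩
      · rintro ⟨s, hs, hrs⟩
        rcases eq_or_ne s p with rfl | h
        · exact ⟨q, he, lt_trans hrs hpq⟩
        · exact ⟨s, by rwa [hx', Finsupp.erase_ne h], hrs⟩
    have hres : res x' = res x := by
      ext r
      rw [res_apply, res_apply]
      rcases Classical.em (dm x r) with h | h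
      · rw [if_pos ((hdm r).mpr h), if_pos h]
      · rw [if_neg (fun hc => h ((hdm r).mp hc)), if_neg h]
        have hrp : r ≠ p := fun hrp => h (hrp ▸ ⟨q, hq, hpq⟩)
        rw [hx', Finsupp.erase_ne hrp]
    have hcard : (x'.support.filter (fun r => dm x' r)).card < n := by
      rw [← hn]
      apply Finset.card_lt_card
      constructor
      · intro r hr
        simp only [Finset.mem_filter, Finsupp.mem_support_iff] at hr ⊢
        rcases eq_or_ne r p with rfl | h
        · rw [hx', Finsupp.erase_same] at hr; exact absurd rfl hr.1
        · rw [hx', Finsupp.erase_ne h] at hr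
          exact ⟨hr.1, (hdm r).mp hr.2⟩
      · intro hsub
        have hpm : p ∈ x'.support.filter (fun r => dm x' r) := by
          apply hsub
          simp only [Finset.mem_filter, Finsupp.mem_support_iff]
          exact ⟨hxp, ⟨q, hq, hpq⟩⟩
        simp only [Finset.mem_filter, Finsupp.mem_support_iff] at hpm
        rw [hx', Finsupp.erase_same] at hpm
        exact hpm.1 rfl
    exact (triCon I free).trans step (hres ▸ ih _ hcard x' rfl)

theorem tri_nf_aux [Finite I] (x : I →₀ ℕ) (hx : ∀ p, x p ≠ 0 → ¬ dm x p) :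
    triCon I free x (nf free x) := by
  generalize hn : (x.support.filter (fun p => ¬ free p ∧ 2 ≤ x p)).card = n
  induction n using Nat.strong_induction_on generalizing x with
  | _ n ih =>
  rcases Nat.eq_zero_or_pos n with rfl | hpos
  · have hnf : nf free x = x := by
      ext p
      rw [nf_apply]
      rcases Classical.em (x p = 0) with h0 | h0
      · split
        · simp [h0]
        · split <;> simp [h0]
      · rw [if_neg (hx p h0)]
        split
        · rfl
        · have hnm : p ∉ x.support.filter (fun p => ¬ free p ∧ 2 ≤ x p) := by
            rw [Finset.card_eq_zero.mp hn]; simp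
          simp only [Finset.mem_filter, Finsupp.mem_support_iff] at hnm
          push_neg at hnm
          have := hnm h0 ‹¬ free p›
          omega
    rw [hnf]
    exact (triCon I free).refl x
  · have hne : (x.support.filter (fun p => ¬ free p ∧ 2 ≤ x p)).Nonempty := by
      rw [← Finset.card_pos, hn]; exact hpos
    obtain ⟨p, hp⟩ := hne
    simp only [Finset.mem_filter, Finsupp.mem_support_iff] at hp
    obtain ⟨hxp, hfp, hx2⟩ := hp
    set t := x.erase p + Finsupp.single p 1 with htdef
    have htp : t p = 1 := by
      simp [htdef, Finsupp.add_apply, Finsupp.erase_same, Finsupp.single_apply]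
    have htr : ∀ r, r ≠ p → t r = x r := by
      intro r hr
      simp [htdef, Finsupp.add_apply, Finsupp.erase_ne hr, Finsupp.single_apply, Ne.symm hr]
    have hxt : x = t + Finsupp.single p (x p - 1) := by
      ext r
      rcases eq_or_ne r p with rfl | hr
      · simp [Finsupp.add_apply, htp, Finsupp.single_apply]
        omega
      · simp [Finsupp.add_apply, htr r hr, Finsupp.single_apply, Ne.symm hr]
    have step : triCon I free x t := by
      conv_lhs => rw [hxt]
      exact tri_absorb t (by rw [htp]; exact one_ne_zero) (Or.inr ⟨rfl, hfp⟩) (x p - 1)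
    have hsupp : ∀ r, t r ≠ 0 ↔ x r ≠ 0 := by
      intro r
      rcases eq_or_ne r p with rfl | hr
      · rw [htp]; constructor <;> intro <;> omega
      · rw [htr r hr]
    have hdm : ∀ r, dm t r ↔ dm x r := by
      intro r
      constructor <;> rintro ⟨s, hs, hrs⟩
      · exact ⟨s, (hsupp s).mp hs, hrs⟩
      · exact ⟨s, (hsupp s).mpr hs, hrs⟩
    have hxt2 : ∀ r, t r ≠ 0 → ¬ dm t r := by
      intro r hr hdr
      exact hx r ((hsupp r).mp hr) ((hdm r).mp hdr)
    have hnf : nf free t = nf free x := by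
      ext r
      rw [nf_apply, nf_apply]
      rcases Classical.em (dm x r) with h | h
      · rw [if_pos ((hdm r).mpr h), if_pos h]
      · rw [if_neg (fun hc => h ((hdm r).mp hc)), if_neg h]
        rcases eq_or_ne r p with rfl | hr
        · rw [htp, if_neg hfp, if_neg hfp]
          omega
        · rw [htr r hr]
    have hcard : (t.support.filter (fun r => ¬ free r ∧ 2 ≤ t r)).card < n := by
      rw [← hn]
      apply Finset.card_lt_card
      constructor
      · intro r hr
        simp only [Finset.mem_filter, Finsupp.mem_support_iff] at hr ⊢
        rcases eq_or_ne r p with rfl | h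
        · rw [htp] at hr; omega
        · rw [htr r h] at hr; exact hr
      · intro hsub
        have hpm : p ∈ t.support.filter (fun r => ¬ free r ∧ 2 ≤ t r) := by
          apply hsub
          simp only [Finset.mem_filter, Finsupp.mem_support_iff]
          exact ⟨hxp, hfp, hx2⟩
        simp only [Finset.mem_filter, Finsupp.mem_support_iff, htp] at hpm
        omega
    exact (triCon I free).trans step (hnf ▸ ih _ hcard t hxt2 rfl)

theorem tri_nf [Finite I] (x : I →₀ ℕ) : triCon I free x (nf free x) := by
  have h1 := tri_res (free := free) x
  have h2 : triCon I free (res x) (nf free (res x)) := by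
    apply tri_nf_aux
    intro r hr hd
    rw [res_apply] at hr
    rcases Classical.em (dm x r) with h | h
    · simp [h] at hr
    · exact h ((dm_res x r).mp hd)
  rw [nf_res] at h2
  exact (triCon I free).trans h1 h2

theorem tri_iff [Finite I] (x y : I →₀ ℕ) :
    triCon I free x y ↔ nf free x = nf free y := by
  constructor
  · intro h
    exact tri_le_nCon h
  · intro h
    exact (triCon I free).trans (tri_nf x)
      (h ▸ (triCon I free).symm (tri_nf y))

theorem mk_eq [Finite I] {x y : I →₀ ℕ} :
    @Eq (MIdx I free) ((triCon I free).mk' x) ((triCon I free).mk' y) ↔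
      nf free x = nf free y := by
  exact Iff.trans ((triCon I free).eq) (tri_iff x y)

theorem mk_add [Finite I] (u v : I →₀ ℕ) :
    @Eq (MIdx I free) (HAdd.hAdd (α := MIdx I free) (β := MIdx I free) (γ := MIdx I free)
      ((triCon I free).mk' u) ((triCon I free).mk' v)) ((triCon I free).mk' (u + v)) :=
  (map_add _ u v).symm

theorem le_iff [Finite I] (u v : I →₀ ℕ) :
    MLe (M := MIdx I free) ((triCon I free).mk' u) ((triCon I free).mk' v) ↔
      ∀ p, dm v p ∨ nf free u p ≤ nf free v p := by
  constructor
  · rintro ⟨z, hz⟩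
    obtain ⟨zf, rfl⟩ := AddCon.mk'_surjective z
    rw [mk_add, mk_eq] at hz
    intro p
    rcases Classical.em (dm v p) with hd | hd
    · exact Or.inl hd
    · right
      have hduz : ¬ dm (u + zf) p := fun hc => hd ((dm_congr hz p).mp hc)
      have hdu : ¬ dm u p := fun hc => hduz ((dm_add u zf p).mpr (Or.inl hc))
      have : nf free u p ≤ nf free (u + zf) p := by
        rw [nf_apply, nf_apply, if_neg hdu, if_neg hduz]
        simp only [Finsupp.add_apply]
        split <;> omega
      rw [hz] at this
      exact this
  · intro h
    have hZ : ∀ a : I, (if dm v a then 0 else nf free v a - nf free u a) ≠ 0 →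
        a ∈ (nf free v).support := by
      intro a ha
      rw [Finsupp.mem_support_iff]
      split at ha
      · exact absurd rfl ha
      · omega
    set Z : I →₀ ℕ := Finsupp.onFinset (nf free v).support
      (fun p => if dm v p then 0 else nf free v p - nf free u p) hZ with hZdef
    have hZap : ∀ p, Z p = if dm v p then 0 else nf free v p - nf free u p := fun _ => rfl
    refine ⟨(triCon I free).mk' Z, ?_⟩
    rw [mk_add, mk_eq]
    have hdm : ∀ p, dm (u + Z) p ↔ dm v p := by
      intro p
      rw [dm_add]
      constructor
      · rintro (hdu | hdZ)
        · obtain ⟨q, hq, hpq, hnd⟩ := exists_max hdu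
          rcases h q with h1 | h1
          · obtain ⟨s, hs, hqs⟩ := h1
            exact ⟨s, hs, lt_trans hpq hqs⟩
          · have h2 : nf free u q ≠ 0 := by
              rw [nf_apply, if_neg hnd]; split <;> omega
            have h3 : nf free v q ≠ 0 := by omega
            exact ⟨q, fun hc => h3 (by rw [nf_apply]; split <;> simp [hc]), hpq⟩
        · obtain ⟨q, hq, hpq⟩ := hdZ
          rw [hZap q] at hq
          have h3 : nf free v q ≠ 0 := by
            rcases Classical.em (dm v q) with hc | hc
            · rw [if_pos hc] at hq; exact absurd rfl hq
            · rw [if_neg hc] at hq; omega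
          exact ⟨q, fun hc => h3 (by rw [nf_apply]; split <;> simp [hc]), hpq⟩
      · intro hdv
        obtain ⟨q, hq, hpq, hnd⟩ := exists_max ((dm_nf (free := free) v p).mpr hdv)
        rw [dm_nf] at hnd
        rcases h q with h1 | h1
        · exact absurd h1 hnd
        · rcases Classical.em (nf free u q = nf free v q) with he | he
          · left
            have : u q ≠ 0 := fun hc => hq (by rw [← he, nf_apply]; split <;> simp [hc])
            exact ⟨q, this, hpq⟩
          · right
            refine ⟨q, ?_, hpq⟩
            rw [hZap q, if_neg hnd]
            omega
    ext p
    rcases Classical.em (dm v p) with hd | hd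
    · rw [nf_apply_of_dm ((hdm p).mpr hd), nf_apply_of_dm hd]
    · have hduz : ¬ dm (u + Z) p := fun hc => hd ((hdm p).mp hc)
      have hdu : ¬ dm u p := fun hc => hduz ((dm_add u Z p).mpr (Or.inl hc))
      rcases h p with h1 | h1
      · exact absurd h1 hd
      · have e2 : nf free u p = if free p then u p else u p ⊓ 1 := by
          rw [nf_apply, if_neg hdu]
        have hc1 : ¬ free p → nf free v p ≤ 1 := by
          intro hf
          rw [nf_apply, if_neg hd, if_neg hf]
          omega
        rw [nf_apply, if_neg hduz, Finsupp.add_apply, hZap p, if_neg hd]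
        rcases Classical.em (free p) with hf | hf
        · rw [if_pos hf]
          rw [e2, if_pos hf] at h1
          rw [e2, if_pos hf]
          omega
        · rw [if_neg hf]
          rw [e2, if_neg hf] at h1
          rw [e2, if_neg hf]
          have := hc1 hf
          omega

theorem nf_eq_of_le_le [Finite I] {u v : I →₀ ℕ}
    (h1 : ∀ p, dm v p ∨ nf free u p ≤ nf free v p)
    (h2 : ∀ p, dm u p ∨ nf free v p ≤ nf free u p) :
    nf free u = nf free v := by
  have dml : ∀ (a b : I →₀ ℕ), (∀ p, dm b p ∨ nf free a p ≤ nf free b p) →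
      ∀ p, dm a p → dm b p := by
    intro a b h p hd
    obtain ⟨q, hq, hpq, hnd⟩ := exists_max hd
    rcases h q with hx | hx
    · obtain ⟨s, hs, hqs⟩ := hx
      exact ⟨s, hs, lt_trans hpq hqs⟩
    · have h2 : nf free a q ≠ 0 := by rw [nf_apply, if_neg hnd]; split <;> omega
      have h3 : nf free b q ≠ 0 := by omega
      have h4 : b q ≠ 0 := fun hc => h3 (by rw [nf_apply]; split <;> simp [hc])
      exact ⟨q, h4, hpq⟩
  ext p
  rcases Classical.em (dm u p) with hd | hd
  · rw [nf_apply_of_dm hd, nf_apply_of_dm (dml u v h1 p hd)]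
  · have hdv : ¬ dm v p := fun hc => hd (dml v u h2 p hc)
    rcases h1 p with hx | hx
    · exact absurd hx hdv
    rcases h2 p with hy | hy
    · exact absurd hy hd
    omega

theorem antisym [Finite I] (x y : MIdx I free) (h1 : MLe x y) (h2 : MLe y x) : x = y := by
  obtain ⟨u, rfl⟩ := AddCon.mk'_surjective x
  obtain ⟨v, rfl⟩ := AddCon.mk'_surjective y
  rw [le_iff] at h1 h2
  rw [mk_eq]
  exact nf_eq_of_le_le h1 h2

theorem mk_eq_zero [Finite I] {u : I →₀ ℕ} :
    @Eq (MIdx I free) ((triCon I free).mk' u) 0 ↔ u = 0 := by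
  have h0 : (0 : MIdx I free) = (triCon I free).mk' 0 := (map_zero _).symm
  rw [h0, mk_eq]
  rw [show nf free (0 : I →₀ ℕ) = 0 from nf_eq_zero_iff.mpr rfl]
  exact nf_eq_zero_iff

theorem nf_eq_of_conds [Finite I] {E A : I →₀ ℕ} (hA : nf free A = A)
    (h1 : ∀ p, ¬ dm A p → ((free p → E p = A p) ∧ (¬ free p → (1 ≤ E p ↔ 1 ≤ A p))))
    (h2 : ∀ p, E p ≠ 0 → A p ≠ 0 ∨ dm A p) :
    nf free E = A := by
  have hdm : ∀ p, dm E p ↔ dm A p := by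
    intro p
    constructor
    · rintro ⟨q, hq, hpq⟩
      rcases h2 q hq with h | h
      · exact ⟨q, h, hpq⟩
      · obtain ⟨s, hs, hqs⟩ := h
        exact ⟨s, hs, lt_trans hpq hqs⟩
    · intro hd
      obtain ⟨q, hq, hpq, hnd⟩ := exists_max hd
      have hEq : E q ≠ 0 := by
        rcases Classical.em (free q) with hf | hf
        · rw [(h1 q hnd).1 hf]; exact hq
        · have := (h1 q hnd).2 hf; omega
      exact ⟨q, hEq, hpq⟩
  ext p
  rcases Classical.em (dm A p) with hd | hd
  · rw [nf_apply_of_dm ((hdm p).mpr hd), ← hA, nf_apply_of_dm hd]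
  · rw [nf_apply, if_neg (fun hc => hd ((hdm p).mp hc))]
    rcases Classical.em (free p) with hf | hf
    · rw [if_pos hf, (h1 p hd).1 hf]
    · rw [if_neg hf]
      have h3 := (h1 p hd).2 hf
      have h4 : A p ≤ 1 := by
        conv_lhs => rw [← hA]
        rw [nf_apply, if_neg hd, if_neg hf]
        omega
      omega

theorem refine_aux [Finite I] (A B C D : I →₀ ℕ)
    (hA : nf free A = A) (hB : nf free B = B) (hC : nf free C = C) (hD : nf free D = D)
    (hn : nf free (A + B) = nf free (C + D)) :
    ∃ w x y z : I →₀ ℕ, nf free (w + x) = A ∧ nf free (y + z) = B ∧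
      nf free (w + y) = C ∧ nf free (x + z) = D := by
  have hdnn : ∀ p, (dm A p ∨ dm B p) ↔ (dm C p ∨ dm D p) := by
    intro p
    rw [← dm_add, ← dm_add]
    exact dm_congr hn p
  have htop : ∀ p, ¬ (dm A p ∨ dm B p) →
      (free p → A p + B p = C p + D p) ∧
      (¬ free p → (1 ≤ A p + B p ↔ 1 ≤ C p + D p)) := by
    intro p hdn
    have hdn' : ¬ (dm C p ∨ dm D p) := fun hc => hdn ((hdnn p).mpr hc)
    have h1 : nf free (A + B) p = nf free (C + D) p := by rw [hn]
    rw [nf_apply, nf_apply, if_neg (fun hc => hdn ((dm_add A B p).mp hc)),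
      if_neg (fun hc => hdn' ((dm_add C D p).mp hc)), Finsupp.add_apply,
      Finsupp.add_apply] at h1
    constructor
    · intro hf
      rw [if_pos hf, if_pos hf] at h1
      exact h1
    · intro hf
      rw [if_neg hf, if_neg hf] at h1
      omega
  have mem4 : ∀ (f : I → ℕ), (∀ a, A a = 0 → B a = 0 → C a = 0 → D a = 0 → f a = 0) →
      ∀ a, f a ≠ 0 → a ∈ ((A.support ∪ B.support) ∪ (C.support ∪ D.support)) := by
    intro f hf a ha
    simp only [Finset.mem_union, Finsupp.mem_support_iff]
    by_contra h
    push_neg at h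
    exact ha (hf a h.1.1 h.1.2 h.2.1 h.2.2)
  set w : I →₀ ℕ := Finsupp.onFinset _
    (fun p => if dm A p ∨ dm B p then
        (if dm C p then A p else 0) + (if dm A p then C p else 0)
      else min (A p) (C p))
    (mem4 _ (by intro a h1 h2 h3 h4; simp only [h1, h3]; split <;> simp)) with hwdef
  set x : I →₀ ℕ := Finsupp.onFinset _
    (fun p => if dm A p ∨ dm B p then
        (if dm C p then 0 else A p) + (if dm A p then D p else 0)
      else if free p then A p - min (A p) (C p) else min (A p) (D p))
    (mem4 _ (by intro a h1 h2 h3 h4; simp only [h1, h4]; split <;> split <;> simp)) with hxdef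
  set y : I →₀ ℕ := Finsupp.onFinset _
    (fun p => if dm A p ∨ dm B p then
        (if dm C p then B p else 0) + (if dm A p then 0 else C p)
      else if free p then C p - min (A p) (C p) else min (B p) (C p))
    (mem4 _ (by intro a h1 h2 h3 h4; simp only [h2, h3]; split <;> split <;> simp)) with hydef
  set z : I →₀ ℕ := Finsupp.onFinset _
    (fun p => if dm A p ∨ dm B p then
        (if dm C p then 0 else B p) + (if dm A p then 0 else D p)
      else if free p then B p - (C p - min (A p) (C p)) else min (B p) (D p))
    (mem4 _ (by intro a h1 h2 h3 h4; simp only [h2, h3, h4]; split <;> split <;> simp)) with hzdef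
  have wap : ∀ p, w p = (if dm A p ∨ dm B p then
      (if dm C p then A p else 0) + (if dm A p then C p else 0)
    else min (A p) (C p)) := fun _ => rfl
  have xap : ∀ p, x p = (if dm A p ∨ dm B p then
      (if dm C p then 0 else A p) + (if dm A p then D p else 0)
    else if free p then A p - min (A p) (C p) else min (A p) (D p)) := fun _ => rfl
  have yap : ∀ p, y p = (if dm A p ∨ dm B p then
      (if dm C p then B p else 0) + (if dm A p then 0 else C p)
    else if free p then C p - min (A p) (C p) else min (B p) (C p)) := fun _ => rfl
  have zap : ∀ p, z p = (if dm A p ∨ dm B p then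
      (if dm C p then 0 else B p) + (if dm A p then 0 else D p)
    else if free p then B p - (C p - min (A p) (C p)) else min (B p) (D p)) := fun _ => rfl
  have key1 : ∀ p, (w + x) p = if dm A p ∨ dm B p then
      A p + (if dm A p then C p + D p else 0)
    else (if free p then A p else min (A p) (C p) + min (A p) (D p)) := by
    intro p
    rw [Finsupp.add_apply, wap, xap]
    rcases Classical.em (dm A p ∨ dm B p) with hdn | hdn
    · rw [if_pos hdn, if_pos hdn, if_pos hdn]
      rcases Classical.em (dm C p) with h | h <;> rcases Classical.em (dm A p) with h' | h' <;>
        simp [h, h'] <;> omega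
    · rw [if_neg hdn, if_neg hdn, if_neg hdn]
      rcases Classical.em (free p) with h | h <;> simp [h] <;> omega
  have key2 : ∀ p, (y + z) p = if dm A p ∨ dm B p then
      B p + (if dm A p then 0 else C p + D p)
    else (if free p then B p else min (B p) (C p) + min (B p) (D p)) := by
    intro p
    rw [Finsupp.add_apply, yap, zap]
    rcases Classical.em (dm A p ∨ dm B p) with hdn | hdn
    · rw [if_pos hdn, if_pos hdn, if_pos hdn]
      rcases Classical.em (dm C p) with h | h <;> rcases Classical.em (dm A p) with h' | h' <;>
        simp [h, h'] <;> omega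
    · rw [if_neg hdn, if_neg hdn, if_neg hdn]
      rcases Classical.em (free p) with h | h
      · have ht := (htop p hdn).1 h
        simp [h] <;> omega
      · simp [h]
  have key3 : ∀ p, (w + y) p = if dm A p ∨ dm B p then
      C p + (if dm C p then A p + B p else 0)
    else (if free p then C p else min (A p) (C p) + min (B p) (C p)) := by
    intro p
    rw [Finsupp.add_apply, wap, yap]
    rcases Classical.em (dm A p ∨ dm B p) with hdn | hdn
    · rw [if_pos hdn, if_pos hdn, if_pos hdn]
      rcases Classical.em (dm C p) with h | h <;> rcases Classical.em (dm A p) with h' | h' <;>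
        simp [h, h'] <;> omega
    · rw [if_neg hdn, if_neg hdn, if_neg hdn]
      rcases Classical.em (free p) with h | h <;> simp [h] <;> omega
  have key4 : ∀ p, (x + z) p = if dm A p ∨ dm B p then
      D p + (if dm C p then 0 else A p + B p)
    else (if free p then D p else min (A p) (D p) + min (B p) (D p)) := by
    intro p
    rw [Finsupp.add_apply, xap, zap]
    rcases Classical.em (dm A p ∨ dm B p) with hdn | hdn
    · rw [if_pos hdn, if_pos hdn, if_pos hdn]
      rcases Classical.em (dm C p) with h | h <;> rcases Classical.em (dm A p) with h' | h' <;>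
        simp [h, h'] <;> omega
    · rw [if_neg hdn, if_neg hdn, if_neg hdn]
      rcases Classical.em (free p) with h | h
      · have ht := (htop p hdn).1 h
        simp [h] <;> omega
      · simp [h]
  refine ⟨w, x, y, z, ?_, ?_, ?_, ?_⟩
  · apply nf_eq_of_conds hA
    · intro p hd
      rw [key1]
      constructor
      · intro hf
        rcases Classical.em (dm A p ∨ dm B p) with hdn | hdn
        · rw [if_pos hdn, if_neg hd]; omega
        · rw [if_neg hdn, if_pos hf]
      · intro hf
        rcases Classical.em (dm A p ∨ dm B p) with hdn | hdn
        · rw [if_pos hdn, if_neg hd]; omega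
        · rw [if_neg hdn, if_neg hf]
          have ht := (htop p hdn).2 hf
          omega
    · intro p hp
      rw [key1] at hp
      rcases Classical.em (dm A p ∨ dm B p) with hdn | hdn
      · rw [if_pos hdn] at hp
        rcases Classical.em (dm A p) with h | h
        · exact Or.inr h
        · rw [if_neg h] at hp; left; omega
      · rw [if_neg hdn] at hp
        left
        rcases Classical.em (free p) with h | h
        · rw [if_pos h] at hp; exact hp
        · rw [if_neg h] at hp; omega
  · apply nf_eq_of_conds hB
    · intro p hd
      rw [key2]
      constructor
      · intro hf
        rcases Classical.em (dm A p ∨ dm B p) with hdn | hdn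
        · have hda : dm A p := hdn.resolve_right hd
          rw [if_pos hdn, if_pos hda]; omega
        · rw [if_neg hdn, if_pos hf]
      · intro hf
        rcases Classical.em (dm A p ∨ dm B p) with hdn | hdn
        · have hda : dm A p := hdn.resolve_right hd
          rw [if_pos hdn, if_pos hda]; omega
        · rw [if_neg hdn, if_neg hf]
          have ht := (htop p hdn).2 hf
          omega
    · intro p hp
      rw [key2] at hp
      rcases Classical.em (dm A p ∨ dm B p) with hdn | hdn
      · rw [if_pos hdn] at hp
        rcases Classical.em (dm A p) with h | h
        · rw [if_pos h] at hp; left; omega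
        · exact Or.inr (hdn.resolve_left h)
      · rw [if_neg hdn] at hp
        left
        rcases Classical.em (free p) with h | h
        · rw [if_pos h] at hp; exact hp
        · rw [if_neg h] at hp; omega
  · apply nf_eq_of_conds hC
    · intro p hd
      rw [key3]
      constructor
      · intro hf
        rcases Classical.em (dm A p ∨ dm B p) with hdn | hdn
        · rw [if_pos hdn, if_neg hd]; omega
        · rw [if_neg hdn, if_pos hf]
      · intro hf
        rcases Classical.em (dm A p ∨ dm B p) with hdn | hdn
        · rw [if_pos hdn, if_neg hd]; omega
        · rw [if_neg hdn, if_neg hf]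
          have ht := (htop p hdn).2 hf
          omega
    · intro p hp
      rw [key3] at hp
      rcases Classical.em (dm A p ∨ dm B p) with hdn | hdn
      · rw [if_pos hdn] at hp
        rcases Classical.em (dm C p) with h | h
        · exact Or.inr h
        · rw [if_neg h] at hp; left; omega
      · rw [if_neg hdn] at hp
        left
        rcases Classical.em (free p) with h | h
        · rw [if_pos h] at hp; exact hp
        · rw [if_neg h] at hp; omega
  · apply nf_eq_of_conds hD
    · intro p hd
      rw [key4]
      constructor
      · intro hf
        rcases Classical.em (dm A p ∨ dm B p) with hdn | hdn
        · have hdc : dm C p := ((hdnn p).mp hdn).resolve_right hd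
          rw [if_pos hdn, if_pos hdc]; omega
        · rw [if_neg hdn, if_pos hf]
      · intro hf
        rcases Classical.em (dm A p ∨ dm B p) with hdn | hdn
        · have hdc : dm C p := ((hdnn p).mp hdn).resolve_right hd
          rw [if_pos hdn, if_pos hdc]; omega
        · rw [if_neg hdn, if_neg hf]
          have ht := (htop p hdn).2 hf
          omega
    · intro p hp
      rw [key4] at hp
      rcases Classical.em (dm A p ∨ dm B p) with hdn | hdn
      · rw [if_pos hdn] at hp
        rcases Classical.em (dm C p) with h | h
        · rw [if_pos h] at hp; left; omega
        · exact Or.inr (((hdnn p).mp hdn).resolve_left h)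
      · rw [if_neg hdn] at hp
        left
        rcases Classical.em (free p) with h | h
        · rw [if_pos h] at hp; exact hp
        · rw [if_neg h] at hp; omega

theorem refinement [Finite I] : IsRefinement (MIdx I free) := by
  intro a b c d habcd
  obtain ⟨A0, rfl⟩ := AddCon.mk'_surjective a
  obtain ⟨B0, rfl⟩ := AddCon.mk'_surjective b
  obtain ⟨C0, rfl⟩ := AddCon.mk'_surjective c
  obtain ⟨D0, rfl⟩ := AddCon.mk'_surjective d
  have hab : nf free (A0 + B0) = nf free (C0 + D0) := by
    rw [← mk_eq, ← mk_add, ← mk_add]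
    exact habcd
  have hnn : ∀ u v : I →₀ ℕ, nf free (nf free u + nf free v) = nf free (u + v) := by
    intro u v
    rw [nf_add_nf_left, add_comm, nf_add_nf_left, add_comm]
  obtain ⟨w, x, y, z, h1, h2, h3, h4⟩ := refine_aux (nf free A0) (nf free B0)
    (nf free C0) (nf free D0) (nf_idem _) (nf_idem _) (nf_idem _) (nf_idem _)
    (by rw [hnn, hnn, hab])
  refine ⟨(triCon I free).mk' w, (triCon I free).mk' x,
    (triCon I free).mk' y, (triCon I free).mk' z, ?_, ?_, ?_, ?_⟩
  · rw [mk_add, mk_eq, h1]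
  · rw [mk_add, mk_eq, h2]
  · rw [mk_add, mk_eq, h3]
  · rw [mk_add, mk_eq, h4]

theorem nf_single_apply [Finite I] (p : I) (k : ℕ) (r : I) :
    nf free (Finsupp.single p k) r = if p = r then (if free p then k else min k 1) else 0 := by
  rw [nf_apply]
  rcases eq_or_ne p r with rfl | hne
  · rw [if_pos rfl]
    have h1 : ¬ dm (Finsupp.single p k) p := by
      rw [dm_single]; rintro ⟨_, hc⟩; exact absurd hc (lt_irrefl p)
    rw [if_neg h1, Finsupp.single_apply, if_pos rfl]
  · rw [if_neg hne, Finsupp.single_apply, if_neg hne]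
    split
    · rfl
    · split <;> simp

theorem smul_gen [Finite I] (p : I) (n : ℕ) :
    n • genI I free p = (triCon I free).mk' (Finsupp.single p n) := by
  induction n with
  | zero => rw [zero_nsmul, Finsupp.single_zero, map_zero]; rfl
  | succ n ih =>
    rw [succ_nsmul, ih]
    unfold genI
    rw [mk_add, ← Finsupp.single_add]

theorem gen_add_gen [Finite I] (p : I) :
    genI I free p + genI I free p = (triCon I free).mk' (Finsupp.single p 2) := by
  unfold genI
  rw [mk_add]
  congr 1
  rw [← Finsupp.single_add]

theorem fingen [Finite I] :
    ∃ S : Finset (MIdx I free), AddSubmonoid.closure (S : Set (MIdx I free)) = ⊤ := by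
  haveI := Fintype.ofFinite I
  classical
  refine ⟨Finset.image (genI I free) Finset.univ, ?_⟩
  rw [eq_top_iff]
  rintro m -
  obtain ⟨u, rfl⟩ := AddCon.mk'_surjective m
  induction u using Finsupp.induction with
  | zero =>
    rw [map_zero]
    exact AddSubmonoid.zero_mem _
  | single_add a n f _ _ ih =>
    rw [← mk_add]
    apply AddSubmonoid.add_mem
    · have hs : (triCon I free).mk' (Finsupp.single a n) = n • genI I free a :=
        (smul_gen a n).symm
      rw [hs]
      apply AddSubmonoid.nsmul_mem
      apply AddSubmonoid.subset_closure
      simp only [Finset.coe_image, Set.mem_image, Finset.mem_coe]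
      exact ⟨a, by simp, rfl⟩
    · exact ih

theorem prime_le_single [Finite I] {X : MIdx I free} (hX : IsPrimeElem X) :
    ∀ (n : ℕ) (a : I), MLe X ((triCon I free).mk' (Finsupp.single a n)) →
      MLe X (genI I free a) := by
  intro n
  induction n with
  | zero =>
    intro a h
    exfalso
    obtain ⟨z, hz⟩ := h
    exact hX.1 ⟨z, by rwa [Finsupp.single_zero, map_zero] at hz⟩
  | succ n ih =>
    intro a h
    rcases Nat.eq_zero_or_pos n with rfl | hn
    · exact h
    · have he : Finsupp.single a (n + 1) = Finsupp.single a n + Finsupp.single a 1 := by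
        rw [← Finsupp.single_add]
      rw [he, ← mk_add] at h
      rcases hX.2 _ _ h with h1 | h1
      · exact ih a h1
      · exact h1

theorem prime_le_sum [Finite I] {X : MIdx I free} (hX : IsPrimeElem X) :
    ∀ u : I →₀ ℕ, MLe X ((triCon I free).mk' u) →
      ∃ p, u p ≠ 0 ∧ MLe X (genI I free p) := by
  intro u
  induction u using Finsupp.induction with
  | zero =>
    intro h
    exfalso
    obtain ⟨z, hz⟩ := h
    exact hX.1 ⟨z, by rwa [map_zero] at hz⟩
  | single_add a n f haf hn ih =>
    intro h
    rw [← mk_add] at h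
    rcases hX.2 _ _ h with h1 | h1
    · refine ⟨a, ?_, prime_le_single hX n a h1⟩
      rw [Finsupp.add_apply, Finsupp.single_apply, if_pos rfl]
      omega
    · obtain ⟨p, hp, hle⟩ := ih h1
      refine ⟨p, ?_, hle⟩
      simp only [Finsupp.add_apply]
      omega

theorem gen_le_of_ne_zero [Finite I] {u : I →₀ ℕ} {p : I} (hp : u p ≠ 0) :
    MLe (M := MIdx I free) (genI I free p) ((triCon I free).mk' u) := by
  unfold genI
  rw [le_iff]
  intro r
  rcases eq_or_ne p r with rfl | hne
  · rcases Classical.em (dm u p) with hd | hd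
    · exact Or.inl hd
    · right
      rw [nf_single_apply, if_pos rfl, nf_apply, if_neg hd]
      split <;> omega
  · right
    rw [nf_single_apply, if_neg hne]
    omega

theorem gen_le_of_dm [Finite I] {u : I →₀ ℕ} {p : I} (hp : dm u p) :
    MLe (M := MIdx I free) (genI I free p) ((triCon I free).mk' u) := by
  unfold genI
  rw [le_iff]
  intro r
  rcases eq_or_ne p r with rfl | hne
  · exact Or.inl hp
  · right
    rw [nf_single_apply, if_neg hne]
    omega

theorem prime_iff [Finite I] (X : MIdx I free) :
    IsPrimeElem X ↔ ∃ p : I, X = genI I free p := by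
  constructor
  · intro hX
    obtain ⟨u, rfl⟩ := AddCon.mk'_surjective X
    obtain ⟨p, hp, hle⟩ := prime_le_sum hX u ⟨0, add_zero _⟩
    refine ⟨p, antisym _ _ hle (gen_le_of_ne_zero hp)⟩
  · rintro ⟨p, rfl⟩
    constructor
    · rintro ⟨q0, hq0⟩
      obtain ⟨v, rfl⟩ := AddCon.mk'_surjective q0
      unfold genI at hq0
      rw [mk_add, mk_eq_zero] at hq0
      have := congrFun (congrArg (fun f : I →₀ ℕ => (f : I → ℕ)) hq0) p
      simp only [Finsupp.coe_add, Pi.add_apply, Finsupp.single_apply, if_pos rfl] at this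
      simp at this
    · intro a b h
      obtain ⟨u, rfl⟩ := AddCon.mk'_surjective a
      obtain ⟨v, rfl⟩ := AddCon.mk'_surjective b
      rw [mk_add] at h
      unfold genI at h
      rw [le_iff] at h
      rcases h p with hd | hv
      · rcases (dm_add u v p).mp hd with hd | hd
        · exact Or.inl (gen_le_of_dm hd)
        · exact Or.inr (gen_le_of_dm hd)
      · rw [nf_single_apply, if_pos rfl] at hv
        have h1 : 1 ≤ nf free (u + v) p := by split at hv <;> omega
        have h2 : (u + v) p ≠ 0 := by
          intro hc
          rw [nf_apply] at h1
          split at h1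
          · omega
          · rw [hc] at h1; split at h1 <;> omega
        rw [Finsupp.add_apply] at h2
        rcases Nat.eq_zero_or_pos (u p) with h3 | h3
        · exact Or.inr (gen_le_of_ne_zero (by omega))
        · exact Or.inl (gen_le_of_ne_zero (by omega))

theorem bullet5 [Finite I] (p : I) :
    MLe (genI I free p + genI I free p) (genI I free p) ↔ ¬ free p := by
  rw [gen_add_gen]
  unfold genI
  rw [le_iff]
  constructor
  · intro h hf
    rcases h p with hd | hv
    · rw [dm_single] at hd
      exact absurd hd.2 (lt_irrefl p)
    · rw [nf_single_apply, nf_single_apply, if_pos rfl, if_pos rfl, if_pos hf, if_pos hf] at hv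
      omega
  · intro hf r
    rcases eq_or_ne p r with rfl | hne
    · right
      rw [nf_single_apply, nf_single_apply, if_pos rfl, if_pos rfl, if_neg hf, if_neg hf]
      omega
    · right
      rw [nf_single_apply, nf_single_apply, if_neg hne, if_neg hne]

theorem bullet6 [Finite I] (p : I) :
    (∀ n m : ℕ, 0 < n → 0 < m →
      MLe (n • genI I free p) (m • genI I free p) → n ≤ m) ↔ free p := by
  constructor
  · intro h
    by_contra hf
    have h21 := h 2 1 (by omega) (by omega)
    apply absurd (h21 ?_) (by omega)
    rw [smul_gen, smul_gen, le_iff]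
    intro r
    rcases eq_or_ne p r with rfl | hne
    · right
      rw [nf_single_apply, nf_single_apply, if_pos rfl, if_pos rfl, if_neg hf, if_neg hf]
      omega
    · right
      rw [nf_single_apply, nf_single_apply, if_neg hne, if_neg hne]
  · intro hf n m hn hm hle
    rw [smul_gen, smul_gen, le_iff] at hle
    rcases hle p with hd | hv
    · rw [dm_single] at hd
      exact absurd hd.2 (lt_irrefl p)
    · rw [nf_single_apply, nf_single_apply, if_pos rfl, if_pos rfl, if_pos hf, if_pos hf] at hv
      exact hv

end Stmt10

/-- For a finite poset `I` with partition `I = I_free ⊔ I_reg`, the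
monoid `M(I,◁)` is an antisymmetric finitely generated refinement monoid, its primes
are exactly the images of the elements of `I`, and `p ∈ I` is a regular prime iff
`p ∈ I_reg` and a free prime iff `p ∈ I_free`. -/
theorem stmt10 (I : Type) [PartialOrder I] [Finite I] (free : I → Prop) :
    (∀ x y : MIdx I free, MLe x y → MLe y x → x = y) ∧
    (∃ S : Finset (MIdx I free), AddSubmonoid.closure (S : Set (MIdx I free)) = ⊤) ∧
    IsRefinement (MIdx I free) ∧
    (∀ x : MIdx I free, IsPrimeElem x ↔ ∃ p : I, x = genI I free p) ∧
    (∀ p : I, (MLe (genI I free p + genI I free p) (genI I free p) ↔ ¬ free p)) ∧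
    (∀ p : I, (∀ n m : ℕ, 0 < n → 0 < m →
      MLe (n • genI I free p) (m • genI I free p) → n ≤ m) ↔ free p) :=
  ⟨Stmt10.antisym, Stmt10.fingen, Stmt10.refinement, Stmt10.prime_iff,
    Stmt10.bullet5, Stmt10.bullet6⟩
end

section
/- Let (E,C) be an adaptable separated graph. Then every hereditary subset of E⁰ is C-saturated: if H ⊆ E⁰ satisfies r(e) ∈ H whenever s(e) ∈ H, then for every v ∈ E⁰ and X ∈ C_v with r(e) ∈ H for all e ∈ X, one has v ∈ H. -/
/-- In an adaptable separated graph, every hereditary subset of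
`E⁰` is `C`-saturated. -/
theorem stmt11 (G : SepGraph) (A : G.AdaptableStructure) (H : Set G.V)
    (hH : ∀ e : G.Ed, G.s e ∈ H → G.r e ∈ H)
    (v : G.V) (X : Finset G.Ed) (hX : X ∈ G.C v) (hXH : ∀ e ∈ X, G.r e ∈ H) :
    v ∈ H := by
  have reach_mem : ∀ u w : G.V, G.Reach u w → u ∈ H → w ∈ H := by
    intro u w h
    induction h with
    | refl => exact id
    | tail _ he ih =>
      intro hu
      obtain ⟨e, hs, hr⟩ := he
      exact hr ▸ hH e (hs ▸ ih hu)
  by_cases hf : A.free v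
  · obtain ⟨e, ⟨heX, her⟩, -⟩ := A.free_loop v hf X hX
    exact her ▸ hXH e heX
  · obtain ⟨e₁, e₂, -, hs₁, -, hEq, -⟩ := A.reg_two_edges v hf
    obtain ⟨Y, hY, heY⟩ := G.c_cover e₁
    rw [hs₁] at hY
    obtain ⟨X', -, huniq⟩ := A.reg_unique_C v hf
    have : Y = X := (huniq Y hY).trans (huniq X hX).symm
    exact reach_mem _ _ hEq.1 (hXH e₁ (this ▸ heY))
end

section
/- Let (E,C) be an adaptable separated graph and let H ⊆ E⁰ be a hereditary subset. Let (E_H, C^H) be the restriction of (E,C) to H, i.e., E_H has vertex set H and edge set {e ∈ E¹ : s(e) ∈ H}, with C^H the induced partitions. Then the natural monoid homomorphism M(E_H,C^H) → M(E,C) sending a_v to a_v (v ∈ H) is injective, and its image is an order-ideal of M(E,C). -/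
/-- A subset of a commutative monoid is an order-ideal if it is a submonoid which is
hereditary for the algebraic pre-order. -/
def IsOrderIdeal {M : Type} [AddCommMonoid M] (S : Set M) : Prop :=
  (0 : M) ∈ S ∧ (∀ x ∈ S, ∀ y ∈ S, x + y ∈ S) ∧ ∀ x y : M, MLe x y → y ∈ S → x ∈ S

namespace SepGraph

/-- The restriction `(E_H, C^H)` of a separated graph `(E,C)` to a hereditary subset
`H ⊆ E⁰`: its vertex set is `H`, its edges are the edges of `E` with source in `H`,
and the partitions are the induced ones. -/
noncomputable def restrict (G : SepGraph) (H : Set G.V)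
    (hH : ∀ e : G.Ed, G.s e ∈ H → G.r e ∈ H) : SepGraph where
  V := H
  Ed := {e : G.Ed // G.s e ∈ H}
  s := fun e => ⟨G.s e.1, e.2⟩
  r := fun e => ⟨G.r e.1, hH e.1 e.2⟩
  C := fun v => {X : Finset {e : G.Ed // G.s e ∈ H} |
    X.map (Function.Embedding.subtype fun e => G.s e ∈ H) ∈ G.C v.1}
  c_src := by
    intro v X hX e he
    exact Subtype.ext (G.c_src v.1 _ hX e.1 (Finset.mem_map_of_mem _ he))
  c_nonempty := by
    intro v X hX
    obtain ⟨a, ha⟩ := G.c_nonempty v.1 _ hX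
    rw [Finset.mem_map] at ha
    obtain ⟨b, hb, rfl⟩ := ha
    exact ⟨b, hb⟩
  c_disjoint := by
    intro v X hX Y hY hne
    exact (Finset.disjoint_map _).mp
      (G.c_disjoint v.1 _ hX _ hY (fun h => hne (Finset.map_injective _ h)))
  c_cover := by
    classical
    intro e
    obtain ⟨X, hX, he⟩ := G.c_cover e.1
    have hmem : ∀ x ∈ X, G.s x ∈ H := by
      intro x hx
      rw [G.c_src (G.s e.1) X hX x hx]
      exact e.2
    refine ⟨X.subtype (fun e => G.s e ∈ H), ?_, ?_⟩
    · show (X.subtype _).map _ ∈ G.C _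
      rw [Finset.subtype_map]
      rwa [Finset.filter_true_of_mem hmem]
    · simpa using he

end SepGraph

section Proof13

namespace SepGraph

variable {G : SepGraph}

lemma mem_of_reach {H : Set G.V} (hH : ∀ e : G.Ed, G.s e ∈ H → G.r e ∈ H)
    {u w : G.V} (h : G.Reach u w) (hu : u ∈ H) : w ∈ H := by
  induction h with
  | refl => exact hu
  | tail _ hbc ih =>
    obtain ⟨e, hs, hr⟩ := hbc
    exact hr ▸ hH e (hs ▸ ih)

end SepGraph

theorem stmt13' (G : SepGraph) (A : G.AdaptableStructure) (H : Set G.V)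
    (hH : ∀ e : G.Ed, G.s e ∈ H → G.r e ∈ H) :
    ∃ f : (G.restrict H hH).M →+ G.M,
      (∀ v : H, f ((G.restrict H hH).gen v) = G.gen v.1) ∧
      Function.Injective f ∧ IsOrderIdeal (Set.range f) := by
  classical
  set R := G.restrict H hH with hR
  set emb := (Function.Embedding.subtype fun e : G.Ed => G.s e ∈ H) with hemb
  set φ : R.FreeM →+ G.FreeM := Finsupp.mapDomain.addMonoidHom Subtype.val with hφ
  have hφsingle : ∀ (v : R.V) (n : ℕ), φ (Finsupp.single v n) = Finsupp.single v.1 n := by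
    intro v n
    exact
      Finsupp.mapDomain_single (f := (Subtype.val : {x // x ∈ H} → G.V)) (a := v) (b := n)
  have hφvert : ∀ v : R.V, φ (R.vert v) = G.vert v.1 := fun v => hφsingle v 1
  have hφrX : ∀ X : Finset R.Ed, φ (R.rX X) = G.rX (X.map emb) := by
    intro X
    rw [SepGraph.rX, SepGraph.rX, map_sum, show (∑ e ∈ X.map emb, Finsupp.single (G.r e) 1 : G.FreeM) = ∑ e ∈ X, Finsupp.single (G.r (emb e)) 1 from Finset.sum_map X emb _]
    exact Finset.sum_congr rfl fun e _ => hφsingle (R.r e) 1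
  -- the homomorphism f
  have hfle : R.mCon ≤ AddCon.ker (G.mCon.mk'.comp φ) := by
    refine AddCon.addConGen_le.2 ?_
    rintro a b ⟨v, X, hX, rfl, rfl⟩
    show G.mCon.mk' (φ (R.vert v)) = G.mCon.mk' (φ (R.rX X))
    rw [hφvert, hφrX]
    exact (AddCon.eq _).2 (AddConGen.Rel.of _ _ ⟨v.1, X.map emb, hX, rfl, rfl⟩)
  set f : R.M →+ G.M := R.mCon.lift (G.mCon.mk'.comp φ) hfle with hf
  have hfmk : ∀ c : R.FreeM, f (R.mCon.mk' c) = G.mCon.mk' (φ c) := fun c =>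
    AddCon.lift_mk' hfle c
  have hfgen : ∀ v : R.V, f (R.gen v) = G.gen v.1 := by
    intro v
    rw [SepGraph.gen, hfmk, hφvert]; rfl
  -- the auxiliary map ψ into WithTop R.M
  set g : G.V → WithTop R.M := fun v =>
    if h : v ∈ H then ((R.gen ⟨v, h⟩ : R.M) : WithTop R.M) else ⊤ with hg
  set ψ : G.FreeM →+ WithTop R.M :=
    Finsupp.liftAddHom (fun v => multiplesHom _ (g v)) with hψ
  have hψsingle : ∀ (v : G.V) (n : ℕ), ψ (Finsupp.single v n) = n • g v := by
    intro v n
    simp [hψ, Finsupp.liftAddHom_apply_single, multiplesHom_apply]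
  have hψrX : ∀ X : Finset G.Ed, ψ (G.rX X) = ∑ e ∈ X, g (G.r e) := by
    intro X
    rw [SepGraph.rX, map_sum]
    exact Finset.sum_congr rfl fun e _ => by rw [hψsingle, one_nsmul]
  -- ψ respects the relations
  have hπle : G.mCon ≤ AddCon.ker ψ := by
    refine AddCon.addConGen_le.2 ?_
    rintro a b ⟨v, X, hX, rfl, rfl⟩
    show ψ (G.vert v) = ψ (G.rX X)
    rw [SepGraph.vert, hψsingle, one_nsmul, hψrX]
    by_cases hv : v ∈ H
    · -- all targets in H; use the relation in R
      have hsrc : ∀ e ∈ X, G.s e ∈ H := fun e he => (G.c_src v X hX e he) ▸ hv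
      set X' : Finset R.Ed := X.subtype (fun e => G.s e ∈ H) with hX'
      have hmap : X'.map emb = X := by
        rw [hX', Finset.subtype_map, Finset.filter_true_of_mem hsrc]
      have hX'C : X' ∈ R.C ⟨v, hv⟩ := by
        show X'.map emb ∈ G.C v
        rw [hmap]; exact hX
      have hrel : R.gen ⟨v, hv⟩ = ∑ e' ∈ X', R.gen (R.r e') := by
        have h2 : R.mCon.mk' (R.vert ⟨v, hv⟩) = R.mCon.mk' (R.rX X') :=
          (AddCon.eq _).2 (AddConGen.Rel.of _ _ ⟨⟨v, hv⟩, X', hX'C, rfl, rfl⟩)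
        show R.mCon.mk' (R.vert ⟨v, hv⟩) = _
        rw [h2, SepGraph.rX, map_sum]; rfl
      calc g v = ((R.gen ⟨v, hv⟩ : R.M) : WithTop R.M) := by rw [hg]; exact dif_pos hv
        _ = ((∑ e' ∈ X', R.gen (R.r e') : R.M) : WithTop R.M) := by rw [hrel]
        _ = ∑ e' ∈ X', ((R.gen (R.r e') : R.M) : WithTop R.M) :=
            map_sum (WithTop.addHom (α := R.M)) (fun e' => R.gen (R.r e')) X'
        _ = ∑ e ∈ X, g (G.r e) := by
            rw [← hmap, Finset.sum_map]
            refine Finset.sum_congr rfl fun e' _ => ?_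
            have h1 : G.r (emb e') ∈ H := hH _ e'.2
            rw [hg]
            simp only [dif_pos h1]
            rfl
    · -- v ∉ H : exhibit an edge in X with target outside H, so both sides are ⊤
      have : ∃ e ∈ X, G.r e ∉ H := by
        by_cases hfree : A.free v
        · obtain ⟨e, ⟨heX, her⟩, _⟩ := A.free_loop v hfree X hX
          exact ⟨e, heX, her ▸ hv⟩
        · obtain ⟨e₁, e₂, _, hs₁, _, hequiv, _⟩ := A.reg_two_edges v hfree
          obtain ⟨Y, hY, heY⟩ := G.c_cover e₁
          obtain ⟨Z, hZ, huniq⟩ := A.reg_unique_C v hfree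
          have hYX : Y = X := by
            rw [huniq Y (hs₁ ▸ hY), huniq X hX]
          refine ⟨e₁, hYX ▸ heY, fun hr => hv ?_⟩
          exact SepGraph.mem_of_reach hH hequiv.1 hr
      obtain ⟨e, heX, her⟩ := this
      have h1 : g v = ⊤ := by rw [hg]; exact dif_neg hv
      have h2 : g (G.r e) = ⊤ := by rw [hg]; exact dif_neg her
      rw [h1, ← Finset.add_sum_erase X _ heX, h2, WithTop.top_add]
  set ι : R.M →+ WithTop R.M := WithTop.addHom with hι
  set π : G.M →+ WithTop R.M := G.mCon.lift ψ hπle with hπ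
  have hπmk : ∀ c : G.FreeM, π (G.mCon.mk' c) = ψ c := fun c => AddCon.lift_mk' hπle c
  have hπgen : ∀ v : G.V, π (G.gen v) = g v := by
    intro v
    rw [SepGraph.gen, hπmk, SepGraph.vert, hψsingle, one_nsmul]
  -- π ∘ f = coe, first on single generators, then in general
  have hπfsingle : ∀ (v : R.V) (n : ℕ),
      π (f (R.mCon.mk' (Finsupp.single v n))) = ι (R.mCon.mk' (Finsupp.single v n)) := by
    intro v n
    have hvn : (Finsupp.single v n : R.FreeM) = n • R.vert v := by
      rw [SepGraph.vert, Finsupp.smul_single, smul_eq_mul, mul_one]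
    rw [hvn, show R.mCon.mk' (n • R.vert v) = (n • R.gen v : R.M) from map_nsmul _ _ _, map_nsmul, map_nsmul, map_nsmul]
    show n • π (f (R.gen v)) = n • ι (R.gen v)
    rw [hfgen, hπgen, hg]
    simp only [dif_pos v.2]
    rfl
  have hπfmk : ∀ c : R.FreeM,
      π (f (R.mCon.mk' c)) = ι (R.mCon.mk' c) := by
    intro c
    induction c using Finsupp.induction with
    | zero => show π (f 0) = ι 0; simp
    | single_add v n c hvc hn ih =>
      rw [map_add]; erw [map_add f, map_add π, map_add ι]
      simp only [map_add, hπfsingle v n, ih]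
  have hπf : ∀ x : R.M, π (f x) = ι x := by
    intro x
    obtain ⟨c, rfl⟩ := R.mCon.mk'_surjective x
    exact hπfmk c
  have hinj : Function.Injective f := by
    intro x y hxy
    have h2 : ι x = ι y := by rw [← hπf, ← hπf, hxy]
    exact WithTop.coe_injective h2
  -- elements with π ≠ ⊤ are in the range of f
  have hrange : ∀ x : G.M, π x ≠ ⊤ → x ∈ Set.range f := by
    have main : ∀ c : G.FreeM, π (G.mCon.mk' c) ≠ ⊤ → ∃ y : R.M, f y = G.mCon.mk' c := by
      intro c
      induction c using Finsupp.induction with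
      | zero => intro _; exact ⟨0, map_zero f⟩
      | single_add v n c hvc hn ih =>
        intro hne
        rw [map_add] at hne; erw [map_add π] at hne; rw [Ne, WithTop.add_eq_top, not_or] at hne
        obtain ⟨hne1, hne2⟩ := hne
        obtain ⟨y, hy⟩ := ih hne2
        have hvH : v ∈ H := by
          by_contra hv
          apply hne1
          rw [hπmk, hψsingle, hg]
          simp only [dif_neg hv]
          obtain ⟨m, rfl⟩ := Nat.exists_eq_succ_of_ne_zero hn
          rw [succ_nsmul, WithTop.add_top]
        refine ⟨n • R.gen ⟨v, hvH⟩ + y, ?_⟩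
        rw [map_add, map_nsmul, hfgen ⟨v, hvH⟩, hy, map_add]
        congr 1
        show n • G.gen v = G.mCon.mk' (Finsupp.single v n)
        have hvn : (Finsupp.single v n : G.FreeM) = n • G.vert v := by
          rw [SepGraph.vert, Finsupp.smul_single, smul_eq_mul, mul_one]
        rw [hvn, map_nsmul]
        rfl
    intro x hne
    obtain ⟨c, rfl⟩ := G.mCon.mk'_surjective x
    obtain ⟨y, hy⟩ := main c hne
    exact ⟨y, hy⟩
  refine ⟨f, hfgen, hinj, ?_, ?_, ?_⟩
  · exact ⟨0, map_zero f⟩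
  · rintro _ ⟨x, rfl⟩ _ ⟨y, rfl⟩
    exact ⟨x + y, map_add f x y⟩
  · rintro x _ ⟨z, hz⟩ ⟨b, rfl⟩
    apply hrange
    intro htop
    have hb : π (x + z) = ι b := by rw [hz, hπf]
    rw [map_add, htop, WithTop.top_add] at hb
    exact WithTop.coe_ne_top hb.symm

end Proof13

/-- For an adaptable separated graph `(E,C)` and a hereditary
subset `H ⊆ E⁰`, the natural monoid homomorphism `M(E_H,C^H) → M(E,C)` sending
`a_v` to `a_v` (`v ∈ H`) is injective, and its image is an order-ideal of `M(E,C)`. -/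
theorem stmt13 (G : SepGraph) (A : G.AdaptableStructure) (H : Set G.V)
    (hH : ∀ e : G.Ed, G.s e ∈ H → G.r e ∈ H) :
    ∃ f : (G.restrict H hH).M →+ G.M,
      (∀ v : H, f ((G.restrict H hH).gen v) = G.gen v.1) ∧
      Function.Injective f ∧ IsOrderIdeal (Set.range f) := by
  exact stmt13' G A H hH
end
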